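/- arXiv:1912.00347 — 9 statements merged into one kernel-verified Lean document; each statement's English description precedes it below -/
import Mathlib

section
/- If k is a field that is not algebraically closed, then for every n ≥ 1 there exists a homogeneous polynomial in n variables over k whose only zero in kⁿ is the zero tuple. -/
open MvPolynomial

/-- Binary normic evaluation lemma: if `f` has no root in `k` and positive degree, then the
homogenization of `f` evaluated at `(a, b)` vanishes iff `a = b = 0`. -/
lemma binary_normic {k : Type} [Field k] (f : Polynomial k)
    (hdeg : 0 < f.natDegree) (hroot : ∀ x : k, f.eval x ≠ 0) (a b : k) :
    (∑ i ∈ Finset.range (f.natDegree + 1), f.coeff i * a ^ i * b ^ (f.natDegree - i)) = 0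
      ↔ a = 0 ∧ b = 0 := by
  have hf : f ≠ 0 := by
    intro h0
    exact hroot 0 (by simp [h0])
  constructor
  · intro hsum
    by_cases hb : b = 0
    · subst hb
      refine ⟨?_, rfl⟩
      have hkey : (∑ i ∈ Finset.range (f.natDegree + 1),
          f.coeff i * a ^ i * (0:k) ^ (f.natDegree - i)) = f.coeff f.natDegree * a ^ f.natDegree := by
        rw [Finset.sum_eq_single f.natDegree]
        · simp
        · intro i hi hne
          have hi' : i < f.natDegree + 1 := Finset.mem_range.mp hi
          have hz : (0:k) ^ (f.natDegree - i) = 0 := zero_pow (by omega)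
          rw [hz, mul_zero]
        · intro hni
          exact absurd (Finset.mem_range.mpr (Nat.lt_succ_self _)) hni
      rw [hkey] at hsum
      have hlc : f.coeff f.natDegree ≠ 0 := by
        have := Polynomial.leadingCoeff_ne_zero.mpr hf
        rwa [Polynomial.leadingCoeff] at this
      rcases mul_eq_zero.mp hsum with h1 | h2
      · exact absurd h1 hlc
      · exact pow_eq_zero_iff (by omega) |>.mp h2
    · exfalso
      have key : (∑ i ∈ Finset.range (f.natDegree + 1),
          f.coeff i * a ^ i * b ^ (f.natDegree - i)) = b ^ f.natDegree * f.eval (a / b) := by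
        rw [Polynomial.eval_eq_sum_range, Finset.mul_sum]
        refine Finset.sum_congr rfl fun i hi => ?_
        have hi' : i ≤ f.natDegree := Nat.lt_succ_iff.mp (Finset.mem_range.mp hi)
        rw [div_pow, pow_sub₀ b hb hi']
        field_simp
      rw [key] at hsum
      rcases mul_eq_zero.mp hsum with h1 | h2
      · exact hb (pow_eq_zero_iff (by omega) |>.mp h1)
      · exact hroot _ h2
  · rintro ⟨rfl, rfl⟩
    refine Finset.sum_eq_zero fun i hi => ?_
    by_cases hi0 : i = 0
    · subst hi0
      have hz : (0:k) ^ (f.natDegree - 0) = 0 := zero_pow (by omega)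
      rw [hz, mul_zero]
    · rw [zero_pow hi0, mul_zero, zero_mul]

/-- If `k` is a field that is not algebraically closed, then for every `n ≥ 1` there exists a
homogeneous polynomial in `n` variables over `k` whose only zero in `kⁿ` is the zero tuple. -/
theorem exists_normic_form_n_vars (k : Type) [Field k] (h : ¬ IsAlgClosed k)
    (n : ℕ) (hn : 1 ≤ n) :
    ∃ (N : MvPolynomial (Fin n) k) (d : ℕ),
      N.IsHomogeneous d ∧ ∀ x : Fin n → k, eval x N = 0 ↔ x = 0 := by
  -- get a polynomial with no root and positive degree
  obtain ⟨f, hmonic, hirr, hroot⟩ : ∃ f : Polynomial k, f.Monic ∧ Irreducible f ∧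
      ∀ x : k, f.eval x ≠ 0 := by
    by_contra hc
    push_neg at hc
    exact h (IsAlgClosed.of_exists_root k hc)
  have hdeg : 0 < f.natDegree := hirr.natDegree_pos
  set e := f.natDegree with he
  -- strengthen: also require 0 < d
  suffices H : ∃ (N : MvPolynomial (Fin n) k) (d : ℕ),
      N.IsHomogeneous d ∧ 0 < d ∧ ∀ x : Fin n → k, eval x N = 0 ↔ x = 0 by
    obtain ⟨N, d, h1, _, h3⟩ := H
    exact ⟨N, d, h1, h3⟩
  clear hn
  induction n with
  | zero =>
    refine ⟨0, 1, isHomogeneous_zero _ _ _, one_pos, fun x => ?_⟩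
    simp only [map_zero, true_iff]
    funext i; exact i.elim0
  | succ m ih =>
    rcases Nat.eq_zero_or_pos m with hm | hm
    · subst hm
      refine ⟨X 0, 1, isHomogeneous_X _ _, one_pos, fun x => ?_⟩
      simp only [eval_X]
      constructor
      · intro hx
        funext i
        fin_cases i
        simpa using hx
      · intro hx; simp [hx]
    · obtain ⟨N, d, hhom, hdpos, heval⟩ := ih
      set M : MvPolynomial (Fin (m + 1)) k :=
        ∑ i ∈ Finset.range (e + 1),
          C (f.coeff i) * (rename Fin.castSucc N) ^ i * (X (Fin.last m)) ^ (d * (e - i)) with hM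
      refine ⟨M, d * e, ?_, by positivity, ?_⟩
      · apply IsHomogeneous.sum
        intro i hi
        have hi' : i ≤ e := Nat.lt_succ_iff.mp (Finset.mem_range.mp hi)
        have h1 : ((rename Fin.castSucc N : MvPolynomial (Fin (m+1)) k) ^ i).IsHomogeneous
            (d * i) := (hhom.rename_isHomogeneous).pow i
        have h2 : ((X (Fin.last m) : MvPolynomial (Fin (m+1)) k) ^ (d * (e - i))).IsHomogeneous
            (d * (e - i)) := isHomogeneous_X_pow _ _
        have hmul := (h1.C_mul (f.coeff i)).mul h2
        have harith : d * i + d * (e - i) = d * e := by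
          rw [← Nat.mul_add, Nat.add_sub_cancel' hi']
        rwa [harith] at hmul
      · intro x
        have hevalM : eval x M = ∑ i ∈ Finset.range (e + 1),
            f.coeff i * (eval (x ∘ Fin.castSucc) N) ^ i * (x (Fin.last m) ^ d) ^ (e - i) := by
          rw [hM, map_sum]
          refine Finset.sum_congr rfl fun i hi => ?_
          simp [eval_rename, ← pow_mul]
        rw [hevalM, binary_normic f hdeg hroot, heval]
        constructor
        · rintro ⟨h1, h2⟩
          funext i
          refine Fin.lastCases ?_ (fun j => ?_) i
          · exact pow_eq_zero_iff hdpos.ne' |>.mp h2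
          · exact congrFun h1 j
        · intro hx
          subst hx
          exact ⟨by funext j; rfl, by rw [Pi.zero_apply]; exact zero_pow hdpos.ne'⟩
end

section
/- Équinullstellensatz: Let k be any field, A a finitely generated k-algebra, and S the set of all f ∈ A such that φ(f) ≠ 0 for every k-algebra homomorphism φ: A → k. If I is an ideal of A disjoint from S and maximal among ideals disjoint from S, then I is a maximal ideal and the structural map k → A/I is an isomorphism. -/
open Polynomial in
/-- If `p` is monic without roots in `k` of positive degree, the associated binary form
vanishes only at the origin. -/
lemma aux_theta {k : Type} [Field k] {p : k[X]} (hm : p.Monic)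
    (hr : ∀ x : k, p.eval x ≠ 0) (hn : 0 < p.natDegree) {c d : k}
    (h : ∑ j ∈ Finset.range (p.natDegree + 1),
        p.coeff j * c ^ j * d ^ (p.natDegree - j) = 0) :
    c = 0 ∧ d = 0 := by
  by_cases hd : d = 0
  · subst hd
    rw [Finset.sum_eq_single p.natDegree (fun j hj hne => by
        rw [zero_pow (Nat.sub_ne_zero_of_lt (lt_of_le_of_ne
          (Nat.lt_succ_iff.mp (Finset.mem_range.mp hj)) hne)), mul_zero])
      (fun hj => absurd (Finset.self_mem_range_succ _) hj), Nat.sub_self, pow_zero,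
      mul_one, hm.coeff_natDegree, one_mul] at h
    exact ⟨pow_eq_zero_iff hn.ne'  |>.mp h, rfl⟩
  · exfalso
    have hkey : p.eval (c / d) * d ^ p.natDegree = 0 := by
      rw [eval_eq_sum_range, Finset.sum_mul, ← h]
      refine Finset.sum_congr rfl fun j hj => ?_
      have hjle : j ≤ p.natDegree := Nat.lt_succ_iff.mp (Finset.mem_range.mp hj)
      rw [mul_assoc, mul_assoc]
      congr 1
      field_simp
      rw [div_pow, ← pow_sub_mul_pow d hjle, div_mul_eq_mul_div, div_eq_iff (pow_ne_zero _ hd)]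
      ring
    rcases mul_eq_zero.mp hkey with h1 | h2
    · exact hr _ h1
    · exact pow_ne_zero _ hd h2

/-- Équinullstellensatz : Let `k` be any field, `A` a finitely generated `k`-algebra, and `S`
the set of all `f ∈ A` such that `φ(f) ≠ 0` for every `k`-algebra homomorphism `φ : A → k`.
If `I` is an ideal of `A` disjoint from `S` and maximal among ideals disjoint from `S`, then
`I` is a maximal ideal and the structural map `k → A/I` is an isomorphism. -/
theorem equinullstellensatz (k A : Type) [Field k] [CommRing A] [Algebra k A]
    [Algebra.FiniteType k A]
    (S : Set A) (hS : S = {f : A | ∀ φ : A →ₐ[k] k, φ f ≠ 0})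
    (I : Ideal A) (hdisj : (I : Set A) ∩ S = ∅)
    (hmax : ∀ J : Ideal A, I ≤ J → (J : Set A) ∩ S = ∅ → J = I) :
    I.IsMaximal ∧ Function.Bijective (algebraMap k (A ⧸ I)) := by
  have hdisj' : ∀ f, f ∈ I → f ∉ S := fun f hf hfS =>
    Set.eq_empty_iff_forall_notMem.mp hdisj f ⟨hf, hfS⟩
  have hItop : I ≠ ⊤ := by
    intro h
    exact hdisj' 1 (h ▸ Submodule.mem_top)
      (by rw [hS]; intro φ; simp)
  -- Key step: there is a `k`-point vanishing on `I`.
  have key : ∃ φ : A →ₐ[k] k, ∀ f ∈ I, φ f = 0 := by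
    by_cases hac : IsAlgClosed k
    · -- algebraically closed case: Zariski's lemma
      obtain ⟨m, hm, him⟩ := Ideal.exists_le_maximal I hItop
      letI : Field (A ⧸ m) := Ideal.Quotient.field m
      haveI : Algebra.FiniteType k (A ⧸ m) :=
        Algebra.FiniteType.of_surjective
          (Ideal.Quotient.mkₐ k m) (Ideal.Quotient.mkₐ_surjective k m)
      haveI : Module.Finite k (A ⧸ m) := finite_of_finite_type_of_isJacobsonRing k (A ⧸ m)
      haveI : Algebra.IsIntegral k (A ⧸ m) := Algebra.IsIntegral.of_finite k (A ⧸ m)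
      haveI := hac
      have hsurj : Function.Surjective (algebraMap k (A ⧸ m)) :=
        IsAlgClosed.algebraMap_bijective_of_isIntegral.2
      have hinj : Function.Injective (algebraMap k (A ⧸ m)) :=
        (algebraMap k (A ⧸ m)).injective
      let e : k ≃ₐ[k] (A ⧸ m) := AlgEquiv.ofBijective (Algebra.ofId k (A ⧸ m)) ⟨hinj, hsurj⟩
      refine ⟨e.symm.toAlgHom.comp (Ideal.Quotient.mkₐ k m), fun f hf => ?_⟩
      have h0 : Ideal.Quotient.mk m f = 0 := (Ideal.Quotient.eq_zero_iff_mem).mpr (him hf)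
      simp [Ideal.Quotient.mkₐ_eq_mk, h0]
    · -- non algebraically closed case
      have hex : ¬ ∀ p : Polynomial k, p.Monic → Irreducible p → ∃ x, p.eval x = 0 :=
        fun H => hac (IsAlgClosed.of_exists_root (k := k) H)
      push_neg at hex
      obtain ⟨p, hm, hirr, hnr⟩ := hex
      have hn : 0 < p.natDegree := by
        rcases Nat.eq_zero_or_pos p.natDegree with h0 | h
        · exact absurd (hm.natDegree_eq_zero.mp h0 ▸ isUnit_one) hirr.not_isUnit
        · exact h
      by_contra hno
      push_neg at hno
      -- generators of I
      haveI : IsNoetherianRing A := Algebra.FiniteType.isNoetherianRing k A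
      obtain ⟨s, hs⟩ := (IsNoetherian.noetherian I : I.FG)
      -- the combining binary operation
      set n := p.natDegree with hn'
      let θ : A → A → A := fun x y =>
        ∑ j ∈ Finset.range (n + 1), algebraMap k A (p.coeff j) * x ^ j * y ^ (n - j)
      have hθI : ∀ x y : A, x ∈ I → y ∈ I → θ x y ∈ I := by
        intro x y hx hy
        refine Ideal.sum_mem I fun j hj => ?_
        have hjle : j ≤ n := Nat.lt_succ_iff.mp (Finset.mem_range.mp hj)
        rcases lt_or_eq_of_le hjle with hlt | heq
        · exact Ideal.mul_mem_left I _ (Ideal.pow_mem_of_mem I hy _ (Nat.sub_pos_of_lt hlt))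
        · subst heq
          exact Ideal.mul_mem_right _ I
            (Ideal.mul_mem_left I _ (Ideal.pow_mem_of_mem I hx _ hn))
      have hθφ : ∀ (φ : A →ₐ[k] k) (x y : A), φ (θ x y) = 0 → φ x = 0 ∧ φ y = 0 := by
        intro φ x y h
        refine aux_theta hm hnr hn (c := φ x) (d := φ y) ?_
        rw [← h]
        simp [θ, map_sum, map_mul, map_pow]
        rfl
      -- fold over a list of generators
      let g : A := s.toList.foldr (fun f acc => θ acc f) 0
      have hfold_mem : ∀ L : List A, (∀ f ∈ L, f ∈ I) →
          L.foldr (fun f acc => θ acc f) 0 ∈ I := by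
        intro L
        induction L with
        | nil => intro _; exact I.zero_mem
        | cons a L ih =>
          intro hmem
          exact hθI _ _ (ih fun f hf => hmem f (List.mem_cons_of_mem a hf))
            (hmem a List.mem_cons_self)
      have hfold_zero : ∀ (φ : A →ₐ[k] k) (L : List A),
          φ (L.foldr (fun f acc => θ acc f) 0) = 0 → ∀ f ∈ L, φ f = 0 := by
        intro φ L
        induction L with
        | nil => intro _ f hf; exact absurd hf List.not_mem_nil
        | cons a L ih =>
          intro h f hf
          obtain ⟨h1, h2⟩ := hθφ φ _ _ h
          rcases List.mem_cons.mp hf with rfl | hf'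
          · exact h2
          · exact ih h1 f hf'
      have hgI : g ∈ I := by
        refine hfold_mem _ fun f hf => ?_
        rw [← hs]
        exact Ideal.subset_span (Finset.mem_toList.mp hf)
      have hgS : g ∈ S := by
        rw [hS]
        intro φ h0
        obtain ⟨f, hfI, hfφ⟩ := hno φ
        have hall := hfold_zero φ _ h0
        have hle : I ≤ RingHom.ker φ := by
          rw [← hs]
          refine Submodule.span_le.mpr fun x hx => ?_
          exact RingHom.mem_ker.mpr (hall x (Finset.mem_toList.mpr hx))
        exact hfφ (RingHom.mem_ker.mp (hle hfI))
      exact hdisj' g hgI hgS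
  obtain ⟨φ, hφ⟩ := key
  have hsurjφ : Function.Surjective φ := fun c => ⟨algebraMap k A c, φ.commutes c⟩
  have hkerS : ((RingHom.ker φ : Ideal A) : Set A) ∩ S = ∅ := by
    apply Set.eq_empty_iff_forall_notMem.mpr
    rintro f ⟨hf1, hf2⟩
    rw [hS] at hf2
    exact hf2 φ (RingHom.mem_ker.mp hf1)
  have hker : (RingHom.ker φ : Ideal A) = I :=
    hmax _ (fun f hf => RingHom.mem_ker.mpr (hφ f hf)) hkerS
  have hMax : I.IsMaximal := hker ▸ RingHom.ker_isMaximal_of_surjective φ hsurjφ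
  refine ⟨hMax, ?_, ?_⟩
  · haveI : Nontrivial (A ⧸ I) := Ideal.Quotient.nontrivial_iff.mpr hMax.ne_top
    exact (algebraMap k (A ⧸ I)).injective
  · intro x
    obtain ⟨a, rfl⟩ := Ideal.Quotient.mk_surjective x
    refine ⟨φ a, ?_⟩
    rw [IsScalarTower.algebraMap_apply k A (A ⧸ I), Ideal.Quotient.algebraMap_eq]
    refine Ideal.Quotient.eq.mpr ?_
    rw [← hker]
    simp [RingHom.mem_ker, map_sub, φ.commutes]
end

section
/- Let k be any field, V ⊆ kⁿ an affine algebraic set with coordinate ring k[V], and S = {g ∈ k[V] : g(P) ≠ 0 for all P ∈ V}. Then an ideal I of k[V] has a common zero in V if and only if I ∩ S = ∅. -/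
open MvPolynomial

set_option maxHeartbeats 1000000
set_option synthInstance.maxHeartbeats 1000000

/-- The coordinate ring `k[V]` of `V ⊆ kⁿ`, realised as the `k`-algebra of polynomial
functions `V → k`. -/
noncomputable def coordRing (k : Type) [Field k] (n : ℕ) (V : Set (Fin n → k)) :
    Subalgebra k (↥V → k) :=
  (MvPolynomial.aeval (fun i (x : ↥V) => (x : Fin n → k) i) :
    MvPolynomial (Fin n) k →ₐ[k] (↥V → k)).range

/-- Pointwise evaluation of the image of a polynomial in the coordinate ring. -/
lemma coordRing_apply {k : Type} [Field k] {n : ℕ} {V : Set (Fin n → k)}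
    (f : MvPolynomial (Fin n) k) (Q : ↥V) :
    (MvPolynomial.aeval (fun i (x : ↥V) => (x : Fin n → k) i) f) Q
      = eval (Q : Fin n → k) f := by
  induction f using MvPolynomial.induction_on with
  | C a => simp [Pi.algebraMap_apply]
  | add p q hp hq => simp [hp, hq]
  | mul_X p i hp => simp [hp]

/-- Over a non-algebraically-closed field there is, for any two ring elements `f g`, an
element of the ideal `(f, g)` whose image under any `k`-algebra map to `k` vanishes iff the
images of both `f` and `g` vanish. -/
lemma combo_aux (k : Type) [Field k] (hk : ¬IsAlgClosed k) {R : Type} [CommRing R]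
    [Algebra k R] (f g : R) :
    ∃ h ∈ Ideal.span {f, g}, ∀ φ : R →ₐ[k] k, (φ h = 0 ↔ φ f = 0 ∧ φ g = 0) := by
  have h2 : ¬ ∀ p : Polynomial k, p.Monic → Irreducible p → ∃ x, p.eval x = 0 :=
    fun H => hk (IsAlgClosed.of_exists_root k H)
  push_neg at h2
  obtain ⟨p, hm, hirr, hroot⟩ := h2
  set d := p.natDegree with hd
  have hd1 : 0 < d := hirr.natDegree_pos
  refine ⟨∑ i ∈ Finset.range (d + 1), p.coeff i • (f ^ i * g ^ (d - i)), ?_, ?_⟩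
  · apply Ideal.sum_mem
    intro i _
    rw [Algebra.smul_def]
    apply Ideal.mul_mem_left
    by_cases hi : i = 0
    · subst hi
      rw [pow_zero, one_mul, Nat.sub_zero]
      exact Ideal.pow_mem_of_mem _ (Ideal.subset_span (by simp)) d hd1
    · exact Ideal.mul_mem_right _ _
        (Ideal.pow_mem_of_mem _ (Ideal.subset_span (by simp)) i (Nat.pos_of_ne_zero hi))
  · intro φ
    rw [map_sum]
    simp only [map_smul, map_mul, map_pow, smul_eq_mul]
    set a := φ f with ha
    set b := φ g with hb
    constructor
    · intro hsum
      by_cases hb0 : b = 0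
      · refine ⟨?_, hb0⟩
        rw [Finset.sum_eq_single_of_mem d (Finset.self_mem_range_succ d)
          (fun i hi hne => by
            have hlt : i < d := lt_of_le_of_ne (Nat.lt_succ_iff.mp (Finset.mem_range.mp hi)) hne
            simp [hb0, zero_pow (Nat.sub_ne_zero_of_lt hlt)])] at hsum
        rw [Nat.sub_self, pow_zero, mul_one, hm.coeff_natDegree, one_mul] at hsum
        exact (pow_eq_zero_iff hd1.ne').mp hsum
      · exfalso
        have key : ∑ i ∈ Finset.range (d + 1), p.coeff i * (a ^ i * b ^ (d - i))
            = p.eval (a / b) * b ^ d := by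
          rw [Polynomial.eval_eq_sum_range, Finset.sum_mul]
          refine Finset.sum_congr rfl fun i hi => ?_
          have hle : i ≤ d := Nat.lt_succ_iff.mp (Finset.mem_range.mp hi)
          rw [div_pow, div_eq_mul_inv, ← inv_pow, pow_sub₀ b hb0 hle]
          ring
        rw [key] at hsum
        rcases mul_eq_zero.mp hsum with h | h
        · exact hroot _ h
        · exact hb0 (pow_eq_zero_iff hd1.ne' |>.mp h)
    · rintro ⟨ha0, hb0⟩
      apply Finset.sum_eq_zero
      intro i hi
      by_cases hi0 : i = 0
      · subst hi0
        rw [hb0, Nat.sub_zero, zero_pow hd1.ne', mul_zero, mul_zero]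
      · rw [ha0, zero_pow hi0, zero_mul, mul_zero]

/-- Iterated version of `combo_aux` for a finite set of generators. -/
lemma combo_finset (k : Type) [Field k] (hk : ¬IsAlgClosed k) {R : Type} [CommRing R]
    [Algebra k R] (s : Finset R) :
    ∃ h ∈ Ideal.span (s : Set R), ∀ φ : R →ₐ[k] k, (φ h = 0 ↔ ∀ f ∈ s, φ f = 0) := by
  classical
  induction s using Finset.induction_on with
  | empty => exact ⟨0, Ideal.zero_mem _, by simp⟩
  | @insert a s ha ih =>
    obtain ⟨h', hmem', hval'⟩ := ih
    obtain ⟨h, hmem, hval⟩ := combo_aux k hk a h'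
    refine ⟨h, ?_, ?_⟩
    · have hsub : Ideal.span {a, h'} ≤ Ideal.span ((insert a s : Finset R) : Set R) := by
        rw [Ideal.span_le]
        rintro x hx
        rcases hx with rfl | hx
        · exact Ideal.subset_span (by simp)
        · rcases Set.mem_singleton_iff.mp hx with rfl
          exact Ideal.span_mono (fun y hy => by simp [hy]) hmem'
      exact hsub hmem
    · intro φ
      rw [hval φ, hval' φ]
      exact (Finset.forall_mem_insert a s (fun f => φ f = 0)).symm

/-- Let `k` be any field, `V ⊆ kⁿ` an affine algebraic set with coordinate ring `k[V]`, and
`S = {g ∈ k[V] : g(P) ≠ 0 for all P ∈ V}`.  Then an ideal `I` of `k[V]` has a common zero in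
`V` if and only if `I ∩ S = ∅`. -/
theorem ideal_has_zero_iff_disjoint (k : Type) [Field k] (n : ℕ) (V : Set (Fin n → k))
    (hV : ∃ T : Set (MvPolynomial (Fin n) k), V = {x | ∀ f ∈ T, eval x f = 0})
    (S : Set ↥(coordRing k n V))
    (hS : S = {g : ↥(coordRing k n V) | ∀ P : ↥V, (g : ↥V → k) P ≠ 0})
    (I : Ideal ↥(coordRing k n V)) :
    (∃ P : ↥V, ∀ f ∈ I, (f : ↥V → k) P = 0) ↔ (I : Set ↥(coordRing k n V)) ∩ S = ∅ := by
  subst hS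
  set A : MvPolynomial (Fin n) k →ₐ[k] (↥V → k) :=
    (MvPolynomial.aeval (fun i (x : ↥V) => (x : Fin n → k) i)) with hA
  have hcoord : coordRing k n V = A.range := rfl
  constructor
  · rintro ⟨P, hP⟩
    rw [Set.eq_empty_iff_forall_notMem]
    rintro g ⟨hgI, hgS⟩
    exact hgS P (hP g hgI)
  · intro hempty
    by_contra hno
    push_neg at hno
    -- `hno : ∀ P, ∃ f ∈ I, f P ≠ 0`
    have hIS : ∀ g : ↥(coordRing k n V), g ∈ I → ∃ P : ↥V, (g : ↥V → k) P = 0 := by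
      intro g hg
      by_contra hgS
      push_neg at hgS
      rw [Set.eq_empty_iff_forall_notMem] at hempty
      exact hempty g ⟨hg, hgS⟩
    by_cases hac : IsAlgClosed k
    · -- algebraically closed: use the Nullstellensatz
      obtain ⟨T, hT⟩ := hV
      set π := A.rangeRestrict with hπ
      set J := I.comap (π.toRingHom) with hJ
      have hZJ : MvPolynomial.zeroLocus k J = ∅ := by
        rw [Set.eq_empty_iff_forall_notMem]
        intro x hx
        rw [MvPolynomial.mem_zeroLocus_iff] at hx
        have hT' := Set.ext_iff.mp hT
        have hxV : x ∈ V := by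
          refine (hT' x).mpr ?_
          intro f hf
          apply hx
          show π f ∈ I
          have : π f = 0 := by
            apply Subtype.ext
            show A f = 0
            funext Q
            have hQ := (hT' (Q : Fin n → k)).mp Q.2
            exact (coordRing_apply f Q).trans (hQ f hf)
          rw [this]; exact I.zero_mem
        obtain ⟨f, hfI, hfP⟩ := hno ⟨x, hxV⟩
        obtain ⟨q, hq⟩ := A.rangeRestrict_surjective f
        have hqJ : q ∈ J := by show π q ∈ I; rw [hq]; exact hfI
        apply hfP
        have : (f : ↥V → k) ⟨x, hxV⟩ = A q ⟨x, hxV⟩ := by rw [← hq]; rfl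
        rw [this, coordRing_apply]
        exact hx q hqJ
      have hJtop : J = ⊤ := by
        have := MvPolynomial.vanishingIdeal_zeroLocus_eq_radical (K := k) J
        rw [hZJ, MvPolynomial.vanishingIdeal_empty] at this
        exact Ideal.radical_eq_top.mp this.symm
      have h1I : (1 : ↥(coordRing k n V)) ∈ I := by
        have : (1 : MvPolynomial (Fin n) k) ∈ J := hJtop ▸ Submodule.mem_top
        have h1 : π (1 : MvPolynomial (Fin n) k) ∈ I := this
        rwa [map_one] at h1
      obtain ⟨P, hP⟩ := hIS 1 h1I
      simp at hP
    · -- not algebraically closed: use the anisotropic-form combination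
      have hNoeth : IsNoetherianRing ↥(coordRing k n V) :=
        isNoetherianRing_of_surjective (MvPolynomial (Fin n) k) _ A.rangeRestrict.toRingHom
          (A.rangeRestrict_surjective)
      obtain ⟨s, hs⟩ := (IsNoetherian.noetherian I : I.FG)
      obtain ⟨h, hmem, hval⟩ := combo_finset k hac s
      have hmemI : h ∈ I := hs ▸ hmem
      obtain ⟨P, hP0⟩ := hIS h hmemI
      -- evaluation at `P` as an algebra hom
      set φ : ↥(coordRing k n V) →ₐ[k] k :=
        (Pi.evalAlgHom k (fun _ : ↥V => k) P).comp (coordRing k n V).val with hφ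
      have hφh : φ h = 0 := hP0
      have hall : ∀ f ∈ s, φ f = 0 := (hval φ).mp hφh
      obtain ⟨f, hfI, hfP⟩ := hno P
      apply hfP
      have hker : I ≤ RingHom.ker φ.toRingHom := by
        rw [← hs, Submodule.span_le]
        intro x hx
        exact hall x (by simpa using hx)
      exact hker hfI
end

section
/- Let k be a field, A a finitely generated k-algebra, S = {f ∈ A : φ(f) ≠ 0 for all k-morphisms φ: A → k}, and M_A = {D(a₁,…,aₘ) : D a polynomial over k with no zero in k, a_i ∈ A}. Then for any ideal J of A: J ∩ S = ∅ if and only if J ∩ M_A = ∅. -/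
open MvPolynomial

/-- The set `M_A` of all evaluations in `A` of polynomials over `k` with no rational zero
in `k`. -/
def MAset (k A : Type) [Field k] [CommRing A] [Algebra k A] : Set A :=
  {x | ∃ (m : ℕ) (D : MvPolynomial (Fin m) k) (b : Fin m → A),
    (∀ v : Fin m → k, eval v D ≠ 0) ∧ x = aeval b D}

section Aux

variable {k : Type} [Field k]

/-- Homogenized combination of two polynomials by a root-free polynomial `q`. -/
noncomputable def qCombo {n : ℕ} (q : Polynomial k) (p g : MvPolynomial (Fin n) k) :
    MvPolynomial (Fin n) k :=
  ∑ i ∈ Finset.range (q.natDegree + 1), C (q.coeff i) * p ^ i * g ^ (q.natDegree - i)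

lemma qCombo_val_eq_zero_iff (q : Polynomial k) (hq : ∀ x, q.eval x ≠ 0)
    (hd : 0 < q.natDegree) (x y : k) :
    (∑ i ∈ Finset.range (q.natDegree + 1), q.coeff i * x ^ i * y ^ (q.natDegree - i)) = 0
      ↔ x = 0 ∧ y = 0 := by
  constructor
  · intro h
    rcases eq_or_ne y 0 with hy | hy
    · subst hy
      have hsum : (∑ i ∈ Finset.range (q.natDegree + 1),
          q.coeff i * x ^ i * (0 : k) ^ (q.natDegree - i))
          = q.coeff q.natDegree * x ^ q.natDegree := by
        rw [Finset.sum_eq_single q.natDegree]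
        · simp
        · intro i hi hne
          have hi' := Finset.mem_range.mp hi
          rw [zero_pow (by omega), mul_zero]
        · intro hmem; exact absurd (Finset.self_mem_range_succ _) hmem
      rw [hsum] at h
      have hq0 : q ≠ 0 := fun h0 => hq 0 (by rw [h0]; simp)
      have hlc : q.coeff q.natDegree ≠ 0 := by
        rw [Polynomial.coeff_natDegree]
        exact Polynomial.leadingCoeff_ne_zero.mpr hq0
      have hx : x ^ q.natDegree = 0 := by
        rcases mul_eq_zero.mp h with h' | h'
        · exact absurd h' hlc
        · exact h'
      exact ⟨pow_eq_zero_iff (by omega) |>.mp hx, rfl⟩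
    · exfalso
      have key : (∑ i ∈ Finset.range (q.natDegree + 1),
          q.coeff i * x ^ i * y ^ (q.natDegree - i)) = y ^ q.natDegree * q.eval (x / y) := by
        rw [Polynomial.eval_eq_sum_range, Finset.mul_sum]
        refine Finset.sum_congr rfl fun i hi => ?_
        have hi' : i ≤ q.natDegree := by
          have := Finset.mem_range.mp hi; omega
        rw [div_pow, pow_sub₀ y hy hi']
        field_simp
      rw [key] at h
      rcases mul_eq_zero.mp h with h' | h'
      · exact hy (pow_eq_zero_iff (by omega) |>.mp h')
      · exact hq _ h'
  · rintro ⟨rfl, rfl⟩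
    refine Finset.sum_eq_zero fun i hi => ?_
    rcases Nat.eq_zero_or_pos i with rfl | hip
    · have h0 : (0 : k) ^ (q.natDegree - 0) = 0 := zero_pow (by omega)
      rw [h0, mul_zero]
    · have h0 : (0 : k) ^ i = 0 := zero_pow (by omega)
      rw [h0, mul_zero, zero_mul]

lemma eval_qCombo {n : ℕ} (q : Polynomial k) (p g : MvPolynomial (Fin n) k) (v : Fin n → k) :
    eval v (qCombo q p g) = ∑ i ∈ Finset.range (q.natDegree + 1),
      q.coeff i * (eval v p) ^ i * (eval v g) ^ (q.natDegree - i) := by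
  simp [qCombo]

lemma qCombo_mem {n : ℕ} (q : Polynomial k) (hd : 0 < q.natDegree)
    {I : Ideal (MvPolynomial (Fin n) k)} {p g : MvPolynomial (Fin n) k}
    (hp : p ∈ I) (hg : g ∈ I) : qCombo q p g ∈ I := by
  refine Ideal.sum_mem _ fun i hi => ?_
  rcases Nat.eq_zero_or_pos i with rfl | hip
  · exact Ideal.mul_mem_left _ _ (Ideal.pow_mem_of_mem _ hg _ (by omega))
  · exact Ideal.mul_mem_right _ _ (Ideal.mul_mem_left _ _ (Ideal.pow_mem_of_mem _ hp _ hip))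

lemma exists_no_zero_poly {n : ℕ} (q : Polynomial k) (hq : ∀ x, q.eval x ≠ 0)
    (hd : 0 < q.natDegree) (T : Finset (MvPolynomial (Fin n) k)) :
    ∃ P ∈ Ideal.span (T : Set (MvPolynomial (Fin n) k)),
      ∀ v : Fin n → k, eval v P = 0 ↔ ∀ g ∈ T, eval v g = 0 := by
  classical
  induction T using Finset.induction_on with
  | empty => exact ⟨0, Ideal.zero_mem _, by simp⟩
  | insert _ _ ha ih =>
    rename_i a T
    obtain ⟨P, hPm, hPv⟩ := ih
    refine ⟨qCombo q P a, ?_, fun v => ?_⟩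
    · rw [Finset.coe_insert]
      have h1 : P ∈ Ideal.span (insert a (T : Set (MvPolynomial (Fin n) k))) :=
        Ideal.span_mono (Set.subset_insert _ _) hPm
      have h2 : a ∈ Ideal.span (insert a (T : Set (MvPolynomial (Fin n) k))) :=
        Ideal.subset_span (Set.mem_insert _ _)
      exact qCombo_mem q hd h1 h2
    · rw [eval_qCombo, qCombo_val_eq_zero_iff q hq hd, hPv]
      simp only [Finset.forall_mem_insert]
      tauto

lemma aeval_self_eq_eval {n : ℕ} (v : Fin n → k) (p : MvPolynomial (Fin n) k) :
    aeval v p = eval v p := by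
  rw [aeval_def, Algebra.algebraMap_self]
  rfl

lemma exists_mem_MA (k A : Type) [Field k] [CommRing A] [Algebra k A]
    [Algebra.FiniteType k A] (J : Ideal A)
    (hno : ∀ φ : A →ₐ[k] k, ∃ j ∈ J, φ j ≠ 0) :
    ∃ x, x ∈ (J : Set A) ∧ x ∈ MAset k A := by
  obtain ⟨n, π, hπ⟩ := Algebra.FiniteType.iff_quotient_mvPolynomial''.mp
    ‹Algebra.FiniteType k A›
  set I : Ideal (MvPolynomial (Fin n) k) := Ideal.comap π J with hIdef
  have hval : ∀ v : Fin n → k, ∃ g ∈ I, eval v g ≠ 0 := by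
    intro v
    by_contra hv
    push_neg at hv
    have hker : ∀ x ∈ RingHom.ker (π : MvPolynomial (Fin n) k →+* A),
        (aeval v : MvPolynomial (Fin n) k →ₐ[k] k) x = 0 := by
      intro x hx
      rw [RingHom.mem_ker] at hx
      have hxI : x ∈ I := by
        rw [hIdef, Ideal.mem_comap]
        simp only [AlgHom.toRingHom_eq_coe, RingHom.coe_coe] at hx
        rw [hx]
        exact J.zero_mem
      rw [aeval_self_eq_eval]
      exact hv x hxI
    let e := Ideal.quotientKerAlgEquivOfSurjective hπ
    let φ : A →ₐ[k] k :=
      (Ideal.Quotient.liftₐ (RingHom.ker (π : MvPolynomial (Fin n) k →+* A))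
        (aeval v) hker).comp e.symm.toAlgHom
    obtain ⟨j, hjJ, hj⟩ := hno φ
    apply hj
    obtain ⟨F, rfl⟩ := hπ j
    have hF : F ∈ I := by rwa [hIdef, Ideal.mem_comap]
    have he : e.symm (π F) = Ideal.Quotient.mk _ F := by
      rw [AlgEquiv.symm_apply_eq]
      rfl
    show (Ideal.Quotient.liftₐ _ (aeval v) hker) (e.symm (π F)) = 0
    rw [he]
    show (aeval v : MvPolynomial (Fin n) k →ₐ[k] k) F = 0
    rw [aeval_self_eq_eval]
    exact hv F hF
  by_cases hk : IsAlgClosed k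
  · haveI := hk
    have hJ : J = ⊤ := by
      by_contra hJ
      have hI : I ≠ ⊤ := by
        intro hI
        apply hJ
        rw [Ideal.eq_top_iff_one]
        have h1 : (1 : MvPolynomial (Fin n) k) ∈ I := hI ▸ Submodule.mem_top
        rw [hIdef, Ideal.mem_comap, map_one] at h1
        exact h1
      obtain ⟨M, hM, hIM⟩ := Ideal.exists_le_maximal I hI
      obtain ⟨x, hx⟩ := (MvPolynomial.isMaximal_iff_eq_vanishingIdeal_singleton (I := M)).mp hM
      obtain ⟨g, hgI, hg⟩ := hval x
      exact hg (by rw [← aeval_self_eq_eval]; exact (MvPolynomial.mem_vanishingIdeal_singleton_iff x g).mp (hx ▸ hIM hgI))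
    refine ⟨1, by simp [hJ], 0, 1, fun _ => 0, fun v => by simp, by simp⟩
  · have hex : ¬ ∀ p : Polynomial k, p.Monic → Irreducible p → ∃ x, p.eval x = 0 :=
      fun h => hk (IsAlgClosed.of_exists_root k h)
    push_neg at hex
    obtain ⟨q, hmonic, hirr, hq⟩ := hex
    have hd : 0 < q.natDegree := hirr.natDegree_pos
    have hIfg : I.FG := IsNoetherian.noetherian I
    obtain ⟨T, hT⟩ := hIfg
    obtain ⟨P, hPI, hPv⟩ := exists_no_zero_poly q hq hd T
    rw [hT] at hPI
    have hPnz : ∀ v : Fin n → k, eval v P ≠ 0 := by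
      intro v hv
      have hall := (hPv v).mp hv
      have hIv : ∀ g ∈ I, eval v g = 0 := by
        intro g hg
        rw [← hT] at hg
        have : ∀ x ∈ I, (aeval v : MvPolynomial (Fin n) k →ₐ[k] k) x = 0 → True := fun _ _ _ => trivial
        refine Submodule.span_induction (fun g hg => hall g hg) (map_zero _)
          (fun a b _ _ ha hb => ?_) (fun c a _ ha => ?_) hg
        · rw [map_add, ha, hb, add_zero]
        · rw [Algebra.smul_def, map_mul, ha, mul_zero]
      obtain ⟨g, hgI, hg⟩ := hval v
      exact hg (hIv g hgI)
    refine ⟨π P, hPI, n, P, fun i => π (X i), hPnz, ?_⟩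
    conv_lhs => rw [aeval_unique π]
    rfl

end Aux

/-- Let `k` be a field, `A` a finitely generated `k`-algebra,
`S = {f ∈ A : φ(f) ≠ 0 for all k-morphisms φ : A → k}` and `M_A` the set of evaluations at
tuples of `A` of polynomials over `k` with no zero in `k`.  Then for any ideal `J` of `A`,
`J ∩ S = ∅` if and only if `J ∩ M_A = ∅`. -/
theorem disjoint_S_iff_disjoint_MA (k A : Type) [Field k] [CommRing A] [Algebra k A]
    [Algebra.FiniteType k A]
    (S : Set A) (hS : S = {f : A | ∀ φ : A →ₐ[k] k, φ f ≠ 0})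
    (J : Ideal A) :
    (J : Set A) ∩ S = ∅ ↔ (J : Set A) ∩ MAset k A = ∅ := by
  subst hS
  constructor
  · intro h
    rw [Set.eq_empty_iff_forall_notMem] at h ⊢
    rintro x ⟨hxJ, m, D, b, hD, rfl⟩
    refine h _ ⟨hxJ, fun φ => ?_⟩
    have hcomp : φ (aeval b D) = aeval (fun i => φ (b i)) D :=
      comp_aeval_apply b φ D
    have heval : aeval (fun i => φ (b i)) D = eval (fun i => φ (b i)) D :=
      RingHom.congr_fun (coe_aeval_eq_eval _) D
    rw [hcomp, heval]
    exact hD _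
  · intro h
    rw [Set.eq_empty_iff_forall_notMem] at h ⊢
    rintro f ⟨hfJ, hfS⟩
    obtain ⟨x, hxJ, hxM⟩ := exists_mem_MA k A J (fun φ => ⟨f, hfJ, hfS φ⟩)
    exact h x ⟨hxJ, hxM⟩
end

section
/- For every finitely generated algebra A over a field k, the canonical localization A_M (localization at the multiplicative set M_A of evaluations of polynomials with no rational zero in k) is isomorphic to the localization A_S, where S = {f ∈ A : φ(f) ≠ 0 for all k-morphisms φ: A → k}. -/
open MvPolynomial

/-- The multiplicative set `S` of elements of `A` not annihilated by any `k`-point of `A`. -/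
def Smonoid (k A : Type) [Field k] [CommRing A] [Algebra k A] : Submonoid A where
  carrier := {f : A | ∀ φ : A →ₐ[k] k, φ f ≠ 0}
  one_mem' := fun φ => by simp
  mul_mem' := fun {a b} ha hb φ => by
    rw [map_mul]; exact mul_ne_zero (ha φ) (hb φ)

section AnisoAux

open Polynomial
section Aniso

variable {k : Type} [Field k]

/-- Key evaluation fact: if `p` is a monic polynomial of positive degree with no root,
then the "homogenized" combination of `a, b` vanishes only at `(0,0)`. -/
lemma key_eval {p : k[X]} (hm : p.Monic) (hroot : ∀ x, p.eval x ≠ 0)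
    (hd : 0 < p.natDegree) {a b : k}
    (h : (∑ i ∈ Finset.range (p.natDegree + 1),
      p.coeff i * a ^ i * b ^ (p.natDegree - i)) = 0) : a = 0 ∧ b = 0 := by
  set d := p.natDegree with hdd
  by_cases hb : b = 0
  · subst hb
    rw [Finset.sum_eq_single d] at h
    · simp only [Nat.sub_self, pow_zero, mul_one, hm.coeff_natDegree, one_mul, ← hdd] at h
      have hc : p.coeff d = 1 := hm.coeff_natDegree
      rw [hc, one_mul] at h
      exact ⟨pow_eq_zero_iff hd.ne' |>.mp h, rfl⟩
    · intro i hi hne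
      have : 0 < d - i := Nat.sub_pos_of_lt (lt_of_le_of_ne (Nat.lt_succ_iff.mp (Finset.mem_range.mp hi)) hne)
      rw [zero_pow this.ne', mul_zero]
    · intro hmem
      exact absurd (Finset.self_mem_range_succ d) hmem
  · exfalso
    have : (∑ i ∈ Finset.range (d + 1), p.coeff i * a ^ i * b ^ (d - i))
        = b ^ d * p.eval (a * b⁻¹) := by
      rw [Polynomial.eval_eq_sum_range, Finset.mul_sum]
      refine Finset.sum_congr rfl fun i hi => ?_
      have hle : i ≤ d := Nat.lt_succ_iff.mp (Finset.mem_range.mp hi)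
      rw [pow_sub₀ b hb hle, mul_pow, inv_pow]
      ring
    rw [this] at h
    rcases mul_eq_zero.mp h with h1 | h1
    · exact pow_ne_zero d hb h1
    · exact hroot _ h1

variable (p : k[X])

/-- The combination of two multivariate polynomials. -/
noncomputable def combine {σ : Type*} (g h : MvPolynomial σ k) : MvPolynomial σ k :=
  ∑ i ∈ Finset.range (p.natDegree + 1),
    MvPolynomial.C (p.coeff i) * g ^ i * h ^ (p.natDegree - i)

lemma combine_mem_span {σ : Type*} (hd : 0 < p.natDegree) (g h : MvPolynomial σ k) :
    combine p g h ∈ Ideal.span {g, h} := by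
  refine Ideal.sum_mem _ fun i hi => ?_
  rcases Nat.eq_zero_or_pos i with rfl | hipos
  · have : h ∣ MvPolynomial.C (p.coeff 0) * g ^ 0 * h ^ (p.natDegree - 0) := by
      simp only [pow_zero, mul_one, Nat.sub_zero]
      exact Dvd.dvd.mul_left (dvd_pow_self h hd.ne') _
    exact Ideal.span_mono (Set.subset_insert _ _) (Ideal.mem_span_singleton.mpr this)
  · have : g ∣ MvPolynomial.C (p.coeff i) * g ^ i * h ^ (p.natDegree - i) :=
      Dvd.dvd.mul_right (Dvd.dvd.mul_left (dvd_pow_self g hipos.ne') _) _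
    have hmem : MvPolynomial.C (p.coeff i) * g ^ i * h ^ (p.natDegree - i) ∈
        Ideal.span ({g} : Set (MvPolynomial σ k)) := Ideal.mem_span_singleton.mpr this
    refine Ideal.span_mono ?_ hmem
    intro x hx; simp_all

lemma eval_combine {σ : Type*} (hm : p.Monic) (hroot : ∀ x, p.eval x ≠ 0)
    (hd : 0 < p.natDegree) (g h : MvPolynomial σ k) (v : σ → k)
    (hz : MvPolynomial.eval v (combine p g h) = 0) :
    MvPolynomial.eval v g = 0 ∧ MvPolynomial.eval v h = 0 := by
  apply key_eval hm hroot hd (a := MvPolynomial.eval v g) (b := MvPolynomial.eval v h)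
  rw [← hz, combine]
  simp [MvPolynomial.eval_sum]

/-- Combining a finite set of polynomials. -/
lemma exists_combo {σ : Type*} (hm : p.Monic) (hroot : ∀ x, p.eval x ≠ 0)
    (hd : 0 < p.natDegree) (G : Finset (MvPolynomial σ k)) :
    ∃ D ∈ Ideal.span (G : Set (MvPolynomial σ k)),
      ∀ v : σ → k, MvPolynomial.eval v D = 0 → ∀ g ∈ G, MvPolynomial.eval v g = 0 := by
  classical
  induction G using Finset.induction_on with
  | empty => exact ⟨0, Ideal.zero_mem _, by simp⟩
  | @insert g G hg ih =>
    obtain ⟨D', hD'mem, hD'⟩ := ih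
    refine ⟨combine p g D', ?_, ?_⟩
    · have h1 : combine p g D' ∈ Ideal.span {g, D'} := combine_mem_span p hd g D'
      refine Ideal.span_le.mpr ?_ h1
      intro x hx
      rcases hx with rfl | hx
      · exact Ideal.subset_span (by simp)
      · simp only [Set.mem_singleton_iff] at hx; subst hx
        exact Ideal.span_mono (by simp) hD'mem
    · intro v hv g' hg'
      obtain ⟨h1, h2⟩ := eval_combine p hm hroot hd g D' v hv
      rcases Finset.mem_insert.mp hg' with rfl | hg'
      · exact h1
      · exact hD' v h2 g' hg'

end Aniso

section Aniso
variable {k : Type} [Field k]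

/-- If an ideal of a polynomial ring over a field has no common rational zero,
then it contains a polynomial with no rational zero. -/
lemma exists_no_zero_mem {n : ℕ} (J : Ideal (MvPolynomial (Fin n) k))
    (hJ : ∀ v : Fin n → k, ∃ g ∈ J, MvPolynomial.eval v g ≠ 0) :
    ∃ D ∈ J, ∀ v : Fin n → k, MvPolynomial.eval v D ≠ 0 := by
  classical
  by_cases hac : IsAlgClosed k
  · -- weak Nullstellensatz: J = ⊤
    have hJtop : J = ⊤ := by
      by_contra hne
      obtain ⟨m, hmax, hle⟩ := Ideal.exists_le_maximal J hne
      obtain ⟨x, rfl⟩ := (MvPolynomial.isMaximal_iff_eq_vanishingIdeal_singleton (I := m)).mp hmax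
      obtain ⟨g, hgJ, hg⟩ := hJ x
      exact hg (by simpa [MvPolynomial.coe_aeval_eq_eval] using (MvPolynomial.mem_vanishingIdeal_singleton_iff x g).mp (hle hgJ))
    exact ⟨1, hJtop ▸ Submodule.mem_top, fun v => by simp⟩
  · -- pick a monic polynomial with no root
    have : ¬ ∀ q : k[X], q.Monic → Irreducible q → ∃ x, q.eval x = 0 := by
      intro h; exact hac (IsAlgClosed.of_exists_root k h)
    push_neg at this
    obtain ⟨p, hm, hirr, hroot⟩ := this
    have hd : 0 < p.natDegree := hirr.natDegree_pos
    obtain ⟨G, hG⟩ := (IsNoetherian.noetherian J : J.FG)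
    obtain ⟨D, hDmem, hD⟩ := exists_combo p hm hroot hd G
    refine ⟨D, hG ▸ hDmem, fun v hv => ?_⟩
    obtain ⟨g, hgJ, hg⟩ := hJ v
    have hall : ∀ g' ∈ G, MvPolynomial.eval v g' = 0 := hD v hv
    have : J ≤ RingHom.ker (MvPolynomial.eval v) := by
      rw [← hG]
      exact Ideal.span_le.mpr fun x hx => hall x hx
    exact hg (this hgJ)

lemma aeval_self_eq_eval_s10 {σ : Type*} (v : σ → k) (q : MvPolynomial σ k) :
    (MvPolynomial.aeval v : MvPolynomial σ k →ₐ[k] k) q = MvPolynomial.eval v q := by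
  rw [MvPolynomial.aeval_def, Algebra.algebraMap_self]
  rfl

end Aniso

section Main

variable (k A : Type) [Field k] [CommRing A] [Algebra k A]

lemma MAset_subset_Smonoid : MAset k A ⊆ (Smonoid k A : Set A) := by
  rintro x ⟨m, D, b, hD, rfl⟩ φ hzero
  have : φ (MvPolynomial.aeval b D) = MvPolynomial.aeval (fun i => φ (b i)) D :=
    MvPolynomial.comp_aeval_apply b φ D
  rw [this, aeval_self_eq_eval_s10] at hzero
  exact hD _ hzero

lemma Smonoid_dvd_MAset [Algebra.FiniteType k A] :
    ∀ f ∈ Smonoid k A, ∃ m ∈ MAset k A, f ∣ m := by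
  obtain ⟨n, π, hπ⟩ := Algebra.FiniteType.iff_quotient_mvPolynomial''.mp ‹Algebra.FiniteType k A›
  intro f hf
  set J : Ideal (MvPolynomial (Fin n) k) :=
    Ideal.comap (π : MvPolynomial (Fin n) k →+* A) (Ideal.span {f}) with hJdef
  have hkerJ : RingHom.ker (π : MvPolynomial (Fin n) k →+* A) ≤ J := by
    intro q hq
    simp only [hJdef, Ideal.mem_comap]
    rw [RingHom.mem_ker] at hq
    rw [hq]; exact Ideal.zero_mem _
  have hJ : ∀ v : Fin n → k, ∃ g ∈ J, MvPolynomial.eval v g ≠ 0 := by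
    intro v
    by_contra hcon
    push_neg at hcon
    -- build a k-point φ : A →ₐ[k] k killing f
    have hker0 : ∀ q ∈ RingHom.ker (π : MvPolynomial (Fin n) k →+* A),
        (MvPolynomial.aeval v : MvPolynomial (Fin n) k →ₐ[k] k) q = 0 := by
      intro q hq
      rw [aeval_self_eq_eval_s10]
      exact hcon q (hkerJ hq)
    let e := Ideal.quotientKerAlgEquivOfSurjective (f := π) hπ
    let φ : A →ₐ[k] k :=
      (Ideal.Quotient.liftₐ (RingHom.ker (π : MvPolynomial (Fin n) k →+* A))
        (MvPolynomial.aeval v) hker0).comp e.symm.toAlgHom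
    obtain ⟨F, hF⟩ := hπ f
    have hFJ : F ∈ J := by
      simp only [hJdef, Ideal.mem_comap]
      rw [show ((π : MvPolynomial (Fin n) k →+* A) F) = f from hF]
      exact Ideal.subset_span rfl
    have hes : e.symm f = Ideal.Quotient.mk _ F := by
      rw [AlgEquiv.symm_apply_eq]
      rw [← hF]
      rfl
    have : φ f = 0 := by
      show (Ideal.Quotient.liftₐ (RingHom.ker (π : MvPolynomial (Fin n) k →+* A))
        (MvPolynomial.aeval v) hker0) (e.symm f) = 0
      rw [hes]
      exact (Ideal.Quotient.lift_mk _ _ _).trans ((aeval_self_eq_eval_s10 v F).trans (hcon F hFJ))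
    exact hf φ this
  obtain ⟨D, hDJ, hD⟩ := exists_no_zero_mem J hJ
  refine ⟨π D, ⟨n, D, ⇑π ∘ MvPolynomial.X, hD, ?_⟩, ?_⟩
  · conv_lhs => rw [MvPolynomial.aeval_unique π]
  · have : π D ∈ Ideal.span {f} := hDJ
    exact (Ideal.mem_span_singleton.mp this)

end Main


/-- For every finitely generated algebra `A` over a field `k`, the canonical localization
`A_M` (at the multiplicative set generated by `M_A`) is isomorphic, as an `A`-algebra, to the
localization `A_S`, where `S = {f ∈ A : φ(f) ≠ 0 for all k-morphisms φ : A → k}`. -/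
theorem canonicalLocalization_iso_localization_S (k A : Type) [Field k] [CommRing A]
    [Algebra k A] [Algebra.FiniteType k A] :
    Nonempty (Localization (Submonoid.closure (MAset k A)) ≃ₐ[A]
      Localization (Smonoid k A)) := by
  have hle : Submonoid.closure (MAset k A) ≤ Smonoid k A :=
    Submonoid.closure_le.mpr (MAset_subset_Smonoid k A)
  haveI : IsLocalization (Smonoid k A) (Localization (Submonoid.closure (MAset k A))) := by
    refine IsLocalization.of_le_of_exists_dvd (Submonoid.closure (MAset k A))
      (Smonoid k A) hle fun s hs => ?_
    obtain ⟨m, hm, hdvd⟩ := Smonoid_dvd_MAset k A s hs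
    exact ⟨m, Submonoid.subset_closure hm, hdvd⟩
  exact ⟨IsLocalization.algEquiv (Smonoid k A)
    (Localization (Submonoid.closure (MAset k A))) (Localization (Smonoid k A))⟩

end AnisoAux
end

section
/- If A is a finitely generated algebra over a field k, then the canonical localization A_M is nonzero if and only if there exists a k-algebra homomorphism A_M → k. -/
open MvPolynomial

section Aux

variable {k : Type} [Field k]

lemma my_aeval_eq_eval {σ : Type} (v : σ → k) (p : MvPolynomial σ k) :
    aeval v p = eval v p := rfl

/-- The homogenization in two variables of a one-variable polynomial. -/
noncomputable def homog (g : Polynomial k) (d : ℕ) : MvPolynomial (Fin 2) k :=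
  ∑ i ∈ Finset.range (d + 1), C (g.coeff i) * X 0 ^ i * X 1 ^ (d - i)

lemma homog_eval (g : Polynomial k) (d : ℕ) (v : Fin 2 → k) :
    eval v (homog g d) =
      ∑ i ∈ Finset.range (d + 1), g.coeff i * v 0 ^ i * v 1 ^ (d - i) := by
  simp [homog]

lemma homog_constantCoeff (g : Polynomial k) {d : ℕ} (hd : 0 < d) :
    constantCoeff (homog g d) = 0 := by
  rw [homog, map_sum]
  apply Finset.sum_eq_zero
  intro i _
  rcases Nat.eq_zero_or_pos i with h | h
  · subst h; simp [zero_pow hd.ne']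
  · simp [zero_pow h.ne']

lemma homog_aniso {g : Polynomial k} (hm : g.Monic)
    (hd : 0 < g.natDegree) (hroot : ∀ x, Polynomial.eval x g ≠ 0) (v : Fin 2 → k)
    (hv : eval v (homog g g.natDegree) = 0) : v = 0 := by
  set d := g.natDegree with hdd
  rw [homog_eval] at hv
  by_cases h1 : v 1 = 0
  · rw [Finset.sum_eq_single d] at hv
    · rw [Nat.sub_self, pow_zero, mul_one, hm.coeff_natDegree, one_mul] at hv
      have h0 : v 0 = 0 := pow_eq_zero_iff hd.ne' |>.mp hv
      funext i
      fin_cases i <;> simp [h0, h1]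
    · intro i hi hne
      have hlt : i < d := lt_of_le_of_ne (Nat.lt_succ_iff.mp (Finset.mem_range.mp hi)) hne
      rw [h1, zero_pow (Nat.sub_ne_zero_of_lt hlt), mul_zero]
    · intro hmem
      exact absurd (Finset.self_mem_range_succ d) hmem
  · exfalso
    apply hroot (v 0 / v 1)
    have hvd : (v 1) ^ d ≠ 0 := pow_ne_zero _ h1
    have key : (v 1) ^ d * Polynomial.eval (v 0 / v 1) g
        = ∑ i ∈ Finset.range (d + 1), g.coeff i * v 0 ^ i * v 1 ^ (d - i) := by
      rw [Polynomial.eval_eq_sum_range, Finset.mul_sum]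
      apply Finset.sum_congr rfl
      intro i hi
      have hid : i ≤ d := Nat.lt_succ_iff.mp (Finset.mem_range.mp hi)
      have hsplit : v 1 ^ d = v 1 ^ i * v 1 ^ (d - i) := by
        rw [← pow_add, Nat.add_sub_cancel' hid]
      rw [div_pow, hsplit]
      field_simp
    rw [hv] at key
    exact (mul_eq_zero.mp key).resolve_left hvd

/-- Iterated anisotropic form in `r` variables. -/
noncomputable def psi (Φ : MvPolynomial (Fin 2) k) : (r : ℕ) → MvPolynomial (Fin r) k
  | 0 => 0
  | r + 1 => aeval ![rename Fin.castSucc (psi Φ r), X (Fin.last r)] Φ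

lemma my_aeval_zero {m : ℕ} (p : MvPolynomial (Fin m) k) :
    aeval (0 : Fin m → k) p = constantCoeff p := by
  rw [aeval_zero]; rfl

lemma psi_constantCoeff {Φ : MvPolynomial (Fin 2) k} (hΦ : constantCoeff Φ = 0) :
    ∀ r, constantCoeff (psi Φ r) = 0
  | 0 => map_zero _
  | r + 1 => by
    rw [psi, ← my_aeval_zero, comp_aeval_apply]
    have hzero : (fun i => aeval (0 : Fin (r + 1) → k)
        (![rename Fin.castSucc (psi Φ r), X (Fin.last r)] i)) = (0 : Fin 2 → k) := by
      funext j
      fin_cases j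
      · show aeval (0 : Fin (r + 1) → k) (rename Fin.castSucc (psi Φ r)) = 0
        rw [aeval_rename]
        have : ((0 : Fin (r + 1) → k) ∘ Fin.castSucc) = (0 : Fin r → k) := rfl
        rw [this, my_aeval_zero, psi_constantCoeff hΦ r]
      · show aeval (0 : Fin (r + 1) → k) (X (Fin.last r)) = 0
        simp
    rw [hzero, my_aeval_zero, hΦ]

lemma psi_aniso {Φ : MvPolynomial (Fin 2) k}
    (hΦ : ∀ v : Fin 2 → k, aeval v Φ = 0 → v = 0) :
    ∀ (r) (v : Fin r → k), aeval v (psi Φ r) = 0 → v = 0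
  | 0, v, _ => funext fun i => i.elim0
  | r + 1, v, hv => by
    rw [psi, comp_aeval_apply] at hv
    have h2 := hΦ _ hv
    have hlast : v (Fin.last r) = 0 := by
      have := congrFun h2 1
      simpa using this
    have hcast : (v ∘ Fin.castSucc) = 0 := by
      apply psi_aniso hΦ r
      have := congrFun h2 0
      simpa [aeval_rename] using this
    funext i
    refine Fin.lastCases ?_ ?_ i
    · exact hlast
    · intro j; exact congrFun hcast j

lemma zero_mem_MAset_of_no_point (k A : Type) [Field k] [CommRing A] [Algebra k A]
    [Algebra.FiniteType k A] (h : IsEmpty (A →ₐ[k] k)) : (0 : A) ∈ MAset k A := by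
  obtain ⟨n, π, hπ⟩ :=
    Algebra.FiniteType.iff_quotient_mvPolynomial''.mp ‹Algebra.FiniteType k A›
  set I : Ideal (MvPolynomial (Fin n) k) := RingHom.ker π with hI
  have lift : ∀ ψ : MvPolynomial (Fin n) k →ₐ[k] k, (∀ x ∈ I, ψ x = 0) → False := by
    intro ψ hψ
    exact h.false ((Ideal.Quotient.liftₐ I ψ hψ).comp
      (Ideal.quotientKerAlgEquivOfSurjective hπ).symm.toAlgHom)
  by_cases hA : Subsingleton A
  · exact ⟨0, 1, Fin.elim0, fun v => by simp, Subsingleton.elim _ _⟩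
  have : Nontrivial A := not_subsingleton_iff_nontrivial.mp hA
  have hnac : ¬ IsAlgClosed k := by
    intro hac
    obtain ⟨m, hm⟩ := Ideal.exists_maximal A
    have hM : (Ideal.comap (π : MvPolynomial (Fin n) k →+* A) m).IsMaximal :=
      Ideal.comap_isMaximal_of_surjective _ hπ
    obtain ⟨a, ha⟩ := (isMaximal_iff_eq_vanishingIdeal_singleton).mp hM
    apply lift (aeval a)
    intro x hx
    have hπx : π x = 0 := hx
    have hxm : x ∈ Ideal.comap (π : MvPolynomial (Fin n) k →+* A) m := by
      rw [Ideal.mem_comap]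
      show π x ∈ m
      rw [hπx]; exact m.zero_mem
    rw [ha] at hxm
    rw [my_aeval_eq_eval]
    exact (mem_vanishingIdeal_singleton_iff a x).mp hxm
  have hpoly : ∃ p : Polynomial k, p.Monic ∧ Irreducible p ∧
      ∀ x, Polynomial.eval x p ≠ 0 := by
    by_contra hcon
    push_neg at hcon
    exact hnac (IsAlgClosed.of_exists_root k hcon)
  obtain ⟨p, hmon, hirr, hroot⟩ := hpoly
  have hd : 0 < p.natDegree := hirr.natDegree_pos
  set Φ := homog p p.natDegree with hΦdef
  have hΦa : ∀ v : Fin 2 → k, aeval v Φ = 0 → v = 0 := fun v hv =>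
    homog_aniso hmon hd hroot v (by rwa [← my_aeval_eq_eval])
  have hΦc : constantCoeff Φ = 0 := homog_constantCoeff p hd
  obtain ⟨r, g, hg⟩ :=
    Submodule.fg_iff_exists_fin_generating_family.mp (IsNoetherian.noetherian I)
  set ψ := psi Φ r with hψdef
  refine ⟨n, aeval g ψ, fun i => π (X i), ?_, ?_⟩
  · intro v hv0
    rw [← my_aeval_eq_eval, comp_aeval_apply] at hv0
    have hall := psi_aniso hΦa r _ hv0
    apply lift (aeval v)
    intro x hx
    rw [← hg] at hx
    refine Submodule.span_induction ?_ ?_ ?_ ?_ hx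
    · rintro y ⟨i, rfl⟩
      exact congrFun hall i
    · exact map_zero _
    · intro y z _ _ hy hz
      rw [map_add, hy, hz, add_zero]
    · intro c y _ hy
      rw [smul_eq_mul, map_mul, hy, mul_zero]
  · have h1 : aeval (fun i => π (X i)) (aeval g ψ) = π (aeval X (aeval g ψ)) :=
      (comp_aeval_apply (f := X) (φ := π) (p := aeval g ψ)).symm
    rw [h1, aeval_X_left_apply, comp_aeval_apply]
    have hzero : (fun i => π (g i)) = (fun _ => (0 : A)) := by
      funext i
      have hgi : g i ∈ I := by
        rw [← hg]; exact Submodule.subset_span ⟨i, rfl⟩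
      exact hgi
    rw [hzero, aeval_zero', psi_constantCoeff hΦc r, map_zero]

end Aux

/-- If `A` is a finitely generated algebra over a field `k`, then the canonical localization
`A_M` is nonzero if and only if there exists a `k`-algebra homomorphism `A_M → k`. -/
theorem canonicalLocalization_nontrivial_iff_point (k A : Type) [Field k] [CommRing A]
    [Algebra k A] [Algebra.FiniteType k A] :
    Nontrivial (Localization (Submonoid.closure (MAset k A))) ↔
      Nonempty (Localization (Submonoid.closure (MAset k A)) →ₐ[k] k) := by
  constructor
  · intro hnt
    have hne : Nonempty (A →ₐ[k] k) := by
      by_contra hcon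
      rw [not_nonempty_iff] at hcon
      have h0 : (0 : A) ∈ Submonoid.closure (MAset k A) :=
        Submonoid.subset_closure (zero_mem_MAset_of_no_point k A hcon)
      have hsub : Subsingleton (Localization (Submonoid.closure (MAset k A))) :=
        IsLocalization.subsingleton h0
      exact (not_nontrivial _) hnt
    obtain ⟨φ⟩ := hne
    refine ⟨IsLocalization.liftAlgHom (M := Submonoid.closure (MAset k A)) (f := φ) ?_⟩
    rintro ⟨y, hy⟩
    refine Submonoid.closure_induction ?_ ?_ ?_ hy
    · rintro x ⟨m, D, b, hD, rfl⟩
      rw [comp_aeval_apply, my_aeval_eq_eval]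
      exact isUnit_iff_ne_zero.mpr (hD _)
    · simp
    · intro a b _ _ ha hb
      rw [map_mul]
      exact ha.mul hb
  · rintro ⟨f⟩
    exact f.toRingHom.domain_nontrivial
end

section
/- Let A be a finitely generated algebra over a field k and I an ideal of A. Then the equiradical of I — the intersection of all maximal ideals m ⊇ I with A/m ≅ k — equals the set of a ∈ A such that I meets the multiplicative set Σ_a generated by all elements a^m · D#(b̄, aⁿ), where D ranges over polynomials over k with no rational zero in k, D# is the homogenization of D, m,n ∈ ℕ, and b̄ ranges over tuples from A. -/
open MvPolynomial

variable (k : Type) [Field k] (A : Type) [CommRing A] [Algebra k A]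

/-- `homogEval D b c` is the evaluation `D#(b, c)` in `A` of the homogenization
`D#(X̄,Y) = Y^{deg D}·D(X̄/Y)` of `D` at the tuple `b` and the element `c`. -/
noncomputable def homogEval {m : ℕ} (D : MvPolynomial (Fin m) k) (b : Fin m → A) (c : A) :
    A :=
  ∑ s ∈ D.support, algebraMap k A (D.coeff s) * (∏ i, b i ^ s i) *
    c ^ (D.totalDegree - s.sum fun _ e => e)

/-- The generating set of the multiplicative set `Σ_a`: all elements `a^m · D#(b̄, aⁿ)` for
`D` a polynomial over `k` with no rational zero in `k`. -/
def sigmaSet (a : A) : Set A :=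
  {x | ∃ (m n mv : ℕ) (D : MvPolynomial (Fin mv) k) (b : Fin mv → A),
    (∀ v : Fin mv → k, eval v D ≠ 0) ∧ x = a ^ m * homogEval k A D b (a ^ n)}

theorem homogEval_map {A' : Type} [CommRing A'] [Algebra k A'] (g : A →ₐ[k] A')
    {m : ℕ} (D : MvPolynomial (Fin m) k) (b : Fin m → A) (c : A) :
    g (homogEval k A D b c) = homogEval k A' D (fun i => g (b i)) (g c) := by
  unfold homogEval
  rw [map_sum]
  refine Finset.sum_congr rfl fun s _ => ?_
  rw [map_mul, map_mul, map_pow, map_prod, AlgHom.commutes]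
  simp [map_pow]

theorem homogEval_self_ne_zero {m : ℕ} (D : MvPolynomial (Fin m) k)
    (hD : ∀ v : Fin m → k, eval v D ≠ 0) (v : Fin m → k) (γ : k) (hγ : γ ≠ 0) :
    homogEval k k D v γ ≠ 0 := by
  have key : homogEval k k D v γ = γ ^ D.totalDegree * eval (fun i => v i * γ⁻¹) D := by
    unfold homogEval
    rw [eval_eq', Finset.mul_sum]
    refine Finset.sum_congr rfl fun s hs => ?_
    have hle : (s.sum fun _ e => e) ≤ D.totalDegree := le_totalDegree hs
    have hsum : (s.sum fun _ e => e) = ∑ i, s i := by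
      rw [Finsupp.sum_fintype]; intro i; rfl
    have hprod : (∏ i, (v i * γ⁻¹) ^ s i) = (∏ i, v i ^ s i) * (γ⁻¹) ^ (∑ i, s i) := by
      rw [← Finset.prod_pow_eq_pow_sum, ← Finset.prod_mul_distrib]
      exact Finset.prod_congr rfl fun i _ => mul_pow _ _ _
    rw [hprod]
    have hpow : γ ^ D.totalDegree * (γ⁻¹) ^ (∑ i, s i)
        = γ ^ (D.totalDegree - s.sum fun _ e => e) := by
      rw [← hsum]
      have : γ ^ D.totalDegree
          = γ ^ (D.totalDegree - s.sum fun _ e => e) * γ ^ (s.sum fun _ e => e) := by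
        rw [← pow_add, Nat.sub_add_cancel hle]
      rw [this, mul_assoc, ← mul_pow, mul_inv_cancel₀ hγ, one_pow, mul_one]
    have halg : algebraMap k k (D.coeff s) = D.coeff s := by simp
    rw [halg]
    ring_nf
    rw [← hpow]
    ring
  rw [key]
  exact mul_ne_zero (pow_ne_zero _ hγ) (hD _)

/-- The easy direction: elements of `Σ_a` avoid special maximal ideals not containing `a`. -/
theorem easy_direction (I : Ideal A) (a : A) (m : Ideal A) (hIm : I ≤ m)
    (hmax : m.IsMaximal) (hbij : Function.Bijective (algebraMap k (A ⧸ m)))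
    (x : A) (hx : x ∈ Submonoid.closure (sigmaSet k A a)) (hxI : x ∈ I) : a ∈ m := by
  by_contra ham
  letI : Field (A ⧸ m) := Ideal.Quotient.field m
  let τ : k ≃ₐ[k] (A ⧸ m) := AlgEquiv.ofBijective (Algebra.ofId k (A ⧸ m)) hbij
  let π : A →ₐ[k] A ⧸ m := Ideal.Quotient.mkₐ k m
  have hπ : ∀ y : A, π y = 0 ↔ y ∈ m := by
    intro y
    simp only [π, Ideal.Quotient.mkₐ_eq_mk]
    exact Ideal.Quotient.eq_zero_iff_mem
  have hπa : π a ≠ 0 := fun h => ham ((hπ a).mp h)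
  have key : ∀ s ∈ sigmaSet k A a, π s ≠ 0 := by
    rintro s ⟨m₀, n, mv, D, b, hD, rfl⟩
    rw [map_mul, map_pow]
    refine mul_ne_zero (pow_ne_zero _ hπa) ?_
    rw [homogEval_map k A π D b (a ^ n)]
    set v : Fin mv → k := fun i => τ.symm (π (b i)) with hv
    set α : k := τ.symm (π a) with hα
    have hα0 : α ≠ 0 := fun h => hπa (by
      have := congrArg τ h
      rwa [AlgEquiv.apply_symm_apply, map_zero] at this)
    have htrans : homogEval k (A ⧸ m) D (fun i => π (b i)) (π (a ^ n))
        = τ (homogEval k k D v (α ^ n)) := by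
      have h2 := homogEval_map k k (A' := A ⧸ m) τ.toAlgHom D v (α ^ n)
      rw [show (τ (homogEval k k D v (α ^ n)) : A ⧸ m)
          = τ.toAlgHom (homogEval k k D v (α ^ n)) from rfl, h2]
      congr 1
      · funext i
        simp [v, AlgEquiv.apply_symm_apply]
      · simp [α, map_pow, AlgEquiv.apply_symm_apply]
    rw [htrans]
    intro h
    have : homogEval k k D v (α ^ n) = 0 := by
      apply τ.injective
      rw [h, map_zero]
    exact homogEval_self_ne_zero k D hD v (α ^ n) (pow_ne_zero _ hα0) this
  let M : Submonoid A :=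
    { carrier := {y | π y ≠ 0}
      one_mem' := by simp
      mul_mem' := by
        intro y z hy hz
        simp only [Set.mem_setOf_eq, map_mul] at *
        exact mul_ne_zero hy hz }
  have hM : x ∈ M := Submonoid.closure_le.mpr (fun s hs => key s hs) hx
  exact hM ((hπ x).mpr (hIm hxI))


section KLCore

variable {k : Type} [Field k]

/-- Iterated "anisotropic" polynomial built from a rootless monic polynomial `p`. -/
noncomputable def aniso (p : Polynomial k) : (r : ℕ) → MvPolynomial (Fin r) k
  | 0 => 0
  | (r + 1) =>
      ∑ i ∈ Finset.range (p.natDegree + 1),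
        MvPolynomial.C (p.coeff i) * (MvPolynomial.rename Fin.castSucc (aniso p r)) ^ i *
          (MvPolynomial.X (Fin.last r)) ^ (p.natDegree - i)

theorem aniso_mem_span (p : Polynomial k) (hd : 1 ≤ p.natDegree) (r : ℕ) :
    aniso p r ∈ Ideal.span (Set.range (X : Fin r → MvPolynomial (Fin r) k)) := by
  induction r with
  | zero => simp [aniso]
  | succ r ih =>
      rw [aniso]
      refine Ideal.sum_mem _ fun i hi => ?_
      rcases eq_or_ne i p.natDegree with rfl | hne
      · -- term C 1 * R ^ d * X ^ 0 ; use R ∈ span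
        have hR : (rename (Fin.castSucc) (aniso p r) : MvPolynomial (Fin (r + 1)) k)
            ∈ Ideal.span (Set.range (X : Fin (r + 1) → MvPolynomial (Fin (r + 1)) k)) := by
          have h1 : (rename (Fin.castSucc) (aniso p r) : MvPolynomial (Fin (r + 1)) k)
              ∈ Ideal.map (rename (Fin.castSucc) : MvPolynomial (Fin r) k →ₐ[k] _)
                  (Ideal.span (Set.range (X : Fin r → MvPolynomial (Fin r) k))) :=
            Ideal.mem_map_of_mem _ ih
          rw [Ideal.map_span] at h1
          refine Ideal.span_le.mpr ?_ h1
          rintro y ⟨z, ⟨j, rfl⟩, rfl⟩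
          exact Ideal.subset_span ⟨Fin.castSucc j, by simp⟩
        have hpow : (rename (Fin.castSucc) (aniso p r)) ^ p.natDegree
            = (rename (Fin.castSucc) (aniso p r)) ^ (p.natDegree - 1)
              * (rename (Fin.castSucc) (aniso p r)) := by
          rw [← pow_succ, Nat.sub_add_cancel hd]
        have hRd : (rename (Fin.castSucc) (aniso p r)) ^ p.natDegree
            ∈ Ideal.span (Set.range (X : Fin (r + 1) → MvPolynomial (Fin (r + 1)) k)) := by
          rw [hpow]
          exact Ideal.mul_mem_left _ _ hR
        rw [Nat.sub_self, pow_zero, mul_one]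
        exact Ideal.mul_mem_left _ _ hRd
      · -- i ≠ d, so i < d and the X-power is positive
        have hilt : i < p.natDegree := by
          have := Finset.mem_range.mp hi
          omega
        have hX : (X (Fin.last r) : MvPolynomial (Fin (r + 1)) k) ^ (p.natDegree - i)
            = (X (Fin.last r)) ^ (p.natDegree - i - 1) * X (Fin.last r) := by
          rw [← pow_succ]
          congr 1
          omega
        rw [hX, ← mul_assoc]
        exact Ideal.mul_mem_left _ _ (Ideal.subset_span ⟨Fin.last r, rfl⟩)

theorem aniso_eval_ne_zero (p : Polynomial k) (hm : p.Monic) (hd : 1 ≤ p.natDegree)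
    (hroot : ∀ t : k, p.eval t ≠ 0) (r : ℕ)
    (u : Fin r → k) (hu : ∃ i, u i ≠ 0) : eval u (aniso p r) ≠ 0 := by
  induction r with
  | zero => exact absurd hu (by simp)
  | succ r ih =>
      rw [aniso]
      have heval : eval u (∑ i ∈ Finset.range (p.natDegree + 1),
          MvPolynomial.C (p.coeff i) * (MvPolynomial.rename Fin.castSucc (aniso p r)) ^ i *
            (MvPolynomial.X (Fin.last r)) ^ (p.natDegree - i))
          = ∑ i ∈ Finset.range (p.natDegree + 1),
              p.coeff i * (eval (u ∘ Fin.castSucc) (aniso p r)) ^ i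
                * (u (Fin.last r)) ^ (p.natDegree - i) := by
        rw [map_sum]
        refine Finset.sum_congr rfl fun i _ => ?_
        rw [map_mul, map_mul, map_pow, map_pow, eval_C, eval_X, eval_rename]
      rw [heval]
      set s : k := eval (u ∘ Fin.castSucc) (aniso p r) with hs
      set t : k := u (Fin.last r) with ht
      rcases eq_or_ne t 0 with ht0 | ht0
      · -- sum collapses to s ^ d
        have hcol : ∑ i ∈ Finset.range (p.natDegree + 1),
            p.coeff i * s ^ i * t ^ (p.natDegree - i) = s ^ p.natDegree := by
          rw [Finset.sum_eq_single p.natDegree]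
          · rw [hm.coeff_natDegree, Nat.sub_self, pow_zero, one_mul, mul_one]
          · intro i hi hne
            have : p.natDegree - i ≠ 0 := by
              have := Finset.mem_range.mp hi
              omega
            rw [ht0, zero_pow this, mul_zero]
          · intro h
            exact absurd (Finset.self_mem_range_succ p.natDegree) h
        rw [hcol]
        have hsne : s ≠ 0 := by
          obtain ⟨i, hi⟩ := hu
          rcases Fin.eq_castSucc_or_eq_last i with ⟨j, rfl⟩ | rfl
          · exact ih (u ∘ Fin.castSucc) ⟨j, hi⟩
          · exact absurd (by rw [← ht] at hi; exact hi) (not_not.mpr ht0)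
        exact pow_ne_zero _ hsne
      · -- sum equals t ^ d * p.eval (s / t)
        have hsum : ∑ i ∈ Finset.range (p.natDegree + 1),
            p.coeff i * s ^ i * t ^ (p.natDegree - i)
            = t ^ p.natDegree * p.eval (s * t⁻¹) := by
          rw [Polynomial.eval_eq_sum_range, Finset.mul_sum]
          refine Finset.sum_congr rfl fun i hi => ?_
          have hile : i ≤ p.natDegree := by
            have := Finset.mem_range.mp hi
            omega
          rw [mul_pow]
          have htp : t ^ p.natDegree = t ^ (p.natDegree - i) * t ^ i := by
            rw [← pow_add, Nat.sub_add_cancel hile]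
          rw [htp]
          field_simp
          ring_nf
          rw [mul_assoc (p.coeff i * s ^ i), ← mul_pow, mul_inv_cancel₀ ht0, one_pow, mul_one]
        rw [hsum]
        exact mul_ne_zero (pow_ne_zero _ ht0) (hroot _)

theorem aeval_eq_eval' (mv : ℕ) (v : Fin mv → k) (q : MvPolynomial (Fin mv) k) :
    aeval v q = eval v q := by
  rw [aeval_def, eval, ← Algebra.algebraMap_self (R := k)]
  rfl

/-- The core of the Nullstellensatz argument: from finitely many polynomials with no
common rational zero, produce a "pointless" polynomial combination. -/
theorem klcore (M : ℕ) (S : Finset (MvPolynomial (Fin M) k))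
    (hnz : ∀ v : Fin M → k, ∃ g ∈ S, eval v g ≠ 0) :
    ∃ (mv : ℕ) (D : MvPolynomial (Fin mv) k) (b : Fin mv → MvPolynomial (Fin M) k),
      (∀ v : Fin mv → k, eval v D ≠ 0) ∧ aeval b D ∈ Ideal.span (S : Set (MvPolynomial (Fin M) k)) := by
  by_cases hirr : ∃ p : Polynomial k, p.Monic ∧ 1 ≤ p.natDegree ∧ ∀ t : k, p.eval t ≠ 0
  · obtain ⟨p, hm, hd, hroot⟩ := hirr
    set r := S.card with hr
    set f : Fin r → MvPolynomial (Fin M) k := fun i => (S.equivFin.symm i : MvPolynomial (Fin M) k) with hf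
    have hfS : ∀ i, f i ∈ S := fun i => (S.equivFin.symm i).2
    refine ⟨M, aeval f (aniso p r), X, ?_, ?_⟩
    · intro v
      have hcomp : eval v (aeval f (aniso p r))
          = eval (fun i => eval v (f i)) (aniso p r) := by
        rw [← aeval_eq_eval' M v]
        have hc := DFunLike.congr_fun
          (comp_aeval (f := f) (φ := (aeval v : MvPolynomial (Fin M) k →ₐ[k] k))) (aniso p r)
        simp only [AlgHom.coe_comp, Function.comp_apply] at hc
        rw [hc]
        have hfun : (fun i => (aeval v : MvPolynomial (Fin M) k →ₐ[k] k) (f i))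
            = fun i => eval v (f i) := funext fun i => aeval_eq_eval' _ _ _
        rw [hfun, aeval_eq_eval']
      rw [hcomp]
      apply aniso_eval_ne_zero p hm hd hroot
      obtain ⟨g, hgS, hg⟩ := hnz v
      refine ⟨S.equivFin ⟨g, hgS⟩, ?_⟩
      have : f (S.equivFin ⟨g, hgS⟩) = g := by
        simp [hf]
      rwa [this]
    · rw [aeval_X_left_apply]
      have h1 : aeval f (aniso p r) ∈ Ideal.map (aeval f : MvPolynomial (Fin r) k →ₐ[k] MvPolynomial (Fin M) k)
          (Ideal.span (Set.range (X : Fin r → MvPolynomial (Fin r) k))) :=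
        Ideal.mem_map_of_mem _ (aniso_mem_span p hd r)
      rw [Ideal.map_span] at h1
      refine Ideal.span_le.mpr ?_ h1
      rintro y ⟨z, ⟨j, rfl⟩, rfl⟩
      have hX : (aeval f : MvPolynomial (Fin r) k →ₐ[k] MvPolynomial (Fin M) k) (X j) = f j := by
        simp
      rw [hX]
      exact Ideal.subset_span (hfS j)
  · -- algebraically closed case
    haveI : IsAlgClosed k := by
      apply IsAlgClosed.of_exists_root
      intro q hq hqirr
      by_contra hno
      push_neg at hno
      exact hirr ⟨q, hq, hqirr.natDegree_pos, fun t ht => hno t ht⟩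
    by_cases hJ : Ideal.span (S : Set (MvPolynomial (Fin M) k)) = ⊤
    · refine ⟨0, 1, fun _ => 0, by simp, ?_⟩
      rw [map_one, hJ]
      trivial
    · obtain ⟨mx, hmx, hle⟩ := Ideal.exists_le_maximal _ hJ
      obtain ⟨x, rfl⟩ := MvPolynomial.isMaximal_iff_eq_vanishingIdeal_singleton.mp hmx
      obtain ⟨g, hgS, hg⟩ := hnz x
      exact absurd ((aeval_eq_eval' M x g).symm.trans ((MvPolynomial.mem_vanishingIdeal_singleton_iff x g).mp
        (hle (Ideal.subset_span hgS)))) hg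

end KLCore

theorem hard_direction (hfg : Algebra.FiniteType k A) (I : Ideal A) (a : A)
    (ha : a ∈ sInf {m : Ideal A | I ≤ m ∧ m.IsMaximal ∧
        Function.Bijective (algebraMap k (A ⧸ m))}) :
    ∃ x, x ∈ Submonoid.closure (sigmaSet k A a) ∧ x ∈ I := by
  classical
  let πI := Ideal.Quotient.mk I
  let aC : A ⧸ I := πI a
  let B := Localization.Away aC
  let πB : A →ₐ[k] B := (IsScalarTower.toAlgHom k (A ⧸ I) B).comp (Ideal.Quotient.mkₐ k I)
  have hπBdef : ∀ y : A, πB y = algebraMap (A ⧸ I) B (πI y) := fun y => rfl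
  have hinv : algebraMap (A ⧸ I) B aC * IsLocalization.Away.invSelf aC = 1 :=
    IsLocalization.Away.mul_invSelf aC
  -- B has no k-points
  have nokpt : ∀ χ : B →ₐ[k] k, False := by
    intro χ
    let φ : A →ₐ[k] k := χ.comp πB
    have hφs : Function.Surjective φ := fun c => ⟨algebraMap k A c, by simp [φ]⟩
    have hmax : (RingHom.ker φ).IsMaximal := RingHom.ker_isMaximal_of_surjective φ hφs
    have hIm : I ≤ RingHom.ker φ := by
      intro c hc
      have h0 : πI c = 0 := Ideal.Quotient.eq_zero_iff_mem.mpr hc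
      have : φ c = 0 := by
        show χ (πB c) = 0
        rw [hπBdef, h0, map_zero, map_zero]
      exact this
    have hbij : Function.Bijective (algebraMap k (A ⧸ RingHom.ker φ)) := by
      constructor
      · refine (injective_iff_map_eq_zero _).mpr fun c hc => ?_
        rw [← Ideal.Quotient.mk_algebraMap] at hc
        have h2 : algebraMap k A c ∈ RingHom.ker φ := Ideal.Quotient.eq_zero_iff_mem.mp hc
        have h3 : φ (algebraMap k A c) = 0 := h2
        rw [AlgHom.commutes] at h3
        simpa using h3
      · intro y
        obtain ⟨x, rfl⟩ := Ideal.Quotient.mk_surjective y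
        refine ⟨φ x, ?_⟩
        rw [← Ideal.Quotient.mk_algebraMap, Ideal.Quotient.mk_eq_mk_iff_sub_mem]
        show φ (algebraMap k A (φ x) - x) = 0
        rw [map_sub, AlgHom.commutes]
        simp
    have ham : a ∈ RingHom.ker φ := by
      have hm := Ideal.mem_sInf.mp ha
      exact hm ⟨hIm, hmax, hbij⟩
    have h1 : φ a * χ (IsLocalization.Away.invSelf aC) = 1 := by
      have h2 : φ a = χ (algebraMap (A ⧸ I) B aC) := rfl
      rw [h2, ← map_mul, hinv, map_one]
    have h0 : φ a = 0 := ham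
    rw [h0, zero_mul] at h1
    exact zero_ne_one h1
  -- presentation of B
  obtain ⟨N₀, ψ₀, hψ₀⟩ := Algebra.FiniteType.iff_quotient_mvPolynomial''.mp hfg
  let inv : B := IsLocalization.Away.invSelf aC
  let g : Fin (N₀ + 1) → B := Fin.snoc (fun j => πB (ψ₀ (X j))) inv
  let ψ : MvPolynomial (Fin (N₀ + 1)) k →ₐ[k] B := aeval g
  have hrename : ∀ q : MvPolynomial (Fin N₀) k, ψ (rename Fin.castSucc q) = πB (ψ₀ q) := by
    intro q
    show (aeval g) (rename Fin.castSucc q) = _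
    rw [aeval_rename]
    have hgc : (g ∘ Fin.castSucc) = fun j => πB (ψ₀ (X j)) := by
      funext j; simp [g, Fin.snoc_castSucc]
    rw [hgc]
    have h4 := DFunLike.congr_fun (aeval_unique (πB.comp ψ₀)) q
    simpa [Function.comp_def] using h4.symm
  have hXlast : ψ (X (Fin.last N₀)) = inv := by
    show (aeval g) (X (Fin.last N₀)) = inv
    rw [aeval_X]
    simp [g, Fin.snoc_last]
  have hψs : Function.Surjective ψ := by
    intro z
    obtain ⟨⟨c, s⟩, hz⟩ := IsLocalization.surj (Submonoid.powers aC) z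
    obtain ⟨n, hn⟩ := (Submonoid.mem_powers_iff _ _).mp s.2
    obtain ⟨c', rfl⟩ := Ideal.Quotient.mk_surjective c
    obtain ⟨q, rfl⟩ := hψ₀ c'
    refine ⟨rename Fin.castSucc q * X (Fin.last N₀) ^ n, ?_⟩
    rw [map_mul, map_pow, hrename, hXlast]
    have hs1 : algebraMap (A ⧸ I) B ↑s * inv ^ n = 1 := by
      rw [← hn, map_pow, ← mul_pow, hinv, one_pow]
    have h5 : πB (ψ₀ q) = z * algebraMap (A ⧸ I) B ↑s := by
      rw [hπBdef, ← hz]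
    rw [h5, mul_assoc, hs1, mul_one]
  -- finitely generated kernel
  have hFG : (RingHom.ker ψ).FG := IsNoetherian.noetherian _
  obtain ⟨S, hS⟩ := hFG
  have hSker : Ideal.span (↑S : Set (MvPolynomial (Fin (N₀ + 1)) k)) = RingHom.ker ψ := hS
  have hnz : ∀ v : Fin (N₀ + 1) → k, ∃ g' ∈ S, eval v g' ≠ 0 := by
    intro v
    by_contra hcon
    push_neg at hcon
    have hker : ∀ y ∈ RingHom.ker ψ,
        (aeval v : MvPolynomial (Fin (N₀ + 1)) k →ₐ[k] k) y = 0 := by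
      intro y hy
      rw [← hSker] at hy
      have hle : Ideal.span (↑S : Set _)
          ≤ RingHom.ker (aeval v : MvPolynomial (Fin (N₀ + 1)) k →ₐ[k] k) := by
        rw [Ideal.span_le]
        intro p hp
        show (aeval v : MvPolynomial (Fin (N₀ + 1)) k →ₐ[k] k) p = 0
        rw [aeval_eq_eval']
        exact hcon p hp
      exact hle hy
    let χ₀ := Ideal.Quotient.liftₐ (RingHom.ker ψ) (aeval v) hker
    let e := Ideal.quotientKerAlgEquivOfSurjective hψs
    exact nokpt (χ₀.comp e.symm.toAlgHom)
  obtain ⟨mv, D, b, hD, hmem⟩ := klcore (N₀ + 1) S hnz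
  have hmemker : aeval b D ∈ RingHom.ker ψ := by rw [← hSker]; exact hmem
  have hzero : aeval (fun i => ψ (b i)) D = 0 := by
    have h1 : ψ (aeval b D) = 0 := hmemker
    have hc := DFunLike.congr_fun (comp_aeval (f := b) (φ := ψ)) D
    simp only [AlgHom.coe_comp, Function.comp_apply] at hc
    rw [← hc]
    exact h1
  let bB : Fin mv → B := fun i => ψ (b i)
  -- representatives of the bB i
  have hsurj : ∀ i, ∃ (c : A ⧸ I) (n : ℕ), bB i * (algebraMap (A ⧸ I) B aC) ^ n
      = algebraMap (A ⧸ I) B c := by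
    intro i
    obtain ⟨⟨c, s⟩, hz⟩ := IsLocalization.surj (Submonoid.powers aC) (bB i)
    obtain ⟨n, hn⟩ := (Submonoid.mem_powers_iff _ _).mp s.2
    exact ⟨c, n, by rw [← map_pow, hn]; exact hz⟩
  choose cs ns hcs using hsurj
  let n := Finset.univ.sup ns
  have hni : ∀ i, ns i ≤ n := fun i => Finset.le_sup (Finset.mem_univ i)
  choose d hd' using fun i => Ideal.Quotient.mk_surjective (cs i * aC ^ (n - ns i))
  have hkey : ∀ i, algebraMap (A ⧸ I) B (πI (d i))
      = bB i * (algebraMap (A ⧸ I) B aC) ^ n := by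
    intro i
    rw [hd' i, map_mul, map_pow, ← hcs i, mul_assoc, ← pow_add,
      Nat.add_sub_cancel' (hni i)]
  -- the main computation
  have hπBh : πB (homogEval k A D d (a ^ n)) = 0 := by
    rw [homogEval_map k A πB D d (a ^ n)]
    have hπBa : πB (a ^ n) = (algebraMap (A ⧸ I) B aC) ^ n := by
      rw [hπBdef, map_pow, map_pow]
    have hcalc : homogEval k B D (fun i => πB (d i)) (πB (a ^ n))
        = (algebraMap (A ⧸ I) B aC) ^ (n * D.totalDegree) * aeval (fun i => ψ (b i)) D := by
      unfold homogEval
      rw [aeval_def, eval₂_eq', Finset.mul_sum, hπBa]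
      refine Finset.sum_congr rfl fun s hs => ?_
      have hle : (s.sum fun _ e => e) ≤ D.totalDegree := le_totalDegree hs
      have hsum : (s.sum fun _ e => e) = ∑ i, s i := by
        rw [Finsupp.sum_fintype]; intro i; rfl
      have hprod : (∏ i, (πB (d i)) ^ s i)
          = (∏ i, bB i ^ s i) * (algebraMap (A ⧸ I) B aC) ^ (n * ∑ i, s i) := by
        calc (∏ i, (πB (d i)) ^ s i)
            = ∏ i, (bB i * (algebraMap (A ⧸ I) B aC) ^ n) ^ s i := by
              refine Finset.prod_congr rfl fun i _ => ?_
              rw [hπBdef, hkey i]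
          _ = (∏ i, bB i ^ s i) * ∏ i, ((algebraMap (A ⧸ I) B aC) ^ n) ^ s i := by
              rw [← Finset.prod_mul_distrib]
              exact Finset.prod_congr rfl fun i _ => mul_pow _ _ _
          _ = (∏ i, bB i ^ s i) * (algebraMap (A ⧸ I) B aC) ^ (n * ∑ i, s i) := by
              congr 1
              calc (∏ i, ((algebraMap (A ⧸ I) B aC) ^ n) ^ s i)
                  = ∏ i, (algebraMap (A ⧸ I) B aC) ^ (n * s i) :=
                    Finset.prod_congr rfl fun i _ => (pow_mul _ n (s i)).symm
                _ = (algebraMap (A ⧸ I) B aC) ^ (∑ i, n * s i) :=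
                    Finset.prod_pow_eq_pow_sum _ _ _
                _ = (algebraMap (A ⧸ I) B aC) ^ (n * ∑ i, s i) := by
                    rw [← Finset.mul_sum]
      have hle' : (∑ i, s i) ≤ D.totalDegree := hsum ▸ hle
      have he : n * (∑ i, s i) + n * (D.totalDegree - s.sum fun _ e => e)
          = n * D.totalDegree := by
        rw [← Nat.mul_add]
        congr 1
        omega
      rw [hprod, ← pow_mul, mul_assoc, mul_assoc, ← pow_add, he]
      ring
    rw [hcalc, hzero, mul_zero]
  have hloc : algebraMap (A ⧸ I) B (πI (homogEval k A D d (a ^ n))) = 0 := by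
    rw [← hπBdef]; exact hπBh
  obtain ⟨s0, hs0⟩ := (IsLocalization.map_eq_zero_iff (Submonoid.powers aC) B _).mp hloc
  obtain ⟨m₀, hm₀⟩ := (Submonoid.mem_powers_iff _ _).mp s0.2
  have hxI : a ^ m₀ * homogEval k A D d (a ^ n) ∈ I := by
    rw [← Ideal.Quotient.eq_zero_iff_mem]
    show πI (a ^ m₀ * homogEval k A D d (a ^ n)) = 0
    rw [map_mul, map_pow]
    have h6 : (πI a) ^ m₀ = (s0 : A ⧸ I) := hm₀
    rw [h6]
    exact hs0
  exact ⟨a ^ m₀ * homogEval k A D d (a ^ n),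
    Submonoid.subset_closure ⟨m₀, n, mv, D, d, hD, rfl⟩, hxI⟩

/-- Let `A` be a finitely generated algebra over a field `k` and `I` an ideal of `A`.  Then
the equiradical of `I` — the intersection of all maximal ideals `m ⊇ I` with `A/m ≅ k` —
equals the set of `a ∈ A` such that `I` meets the multiplicative set `Σ_a`. -/
theorem equiradical_eq_sigma (hfg : Algebra.FiniteType k A) (I : Ideal A) (a : A) :
    a ∈ sInf {m : Ideal A | I ≤ m ∧ m.IsMaximal ∧
        Function.Bijective (algebraMap k (A ⧸ m))} ↔
      ∃ x, x ∈ Submonoid.closure (sigmaSet k A a) ∧ x ∈ I := by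
  constructor
  · exact fun ha => hard_direction k A hfg I a ha
  · rintro ⟨x, hxcl, hxI⟩
    rw [Ideal.mem_sInf]
    rintro m ⟨hIm, hmax, hbij⟩
    exact easy_direction k A I a m hIm hmax hbij x hxcl hxI
end

section
/- An ideal I of a k-algebra A equals its equiradical (intersection of all maximal ideals m ⊇ I with A/m ≅ k) if and only if the quotient A/I embeds as a k-algebra into a power k^S of k for some set S. -/
/-- An ideal `I` of a `k`-algebra `A` equals its equiradical (the intersection of all
maximal ideals `m ⊇ I` with `A/m ≅ k`) if and only if the quotient `A/I` embeds as a
`k`-algebra into a power `k^S` of `k` for some set `S`. -/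
theorem special_ideal_iff_quotient_embeds (k A : Type) [Field k] [CommRing A] [Algebra k A]
    (I : Ideal A) :
    I = sInf {m : Ideal A | I ≤ m ∧ m.IsMaximal ∧
        Function.Bijective (algebraMap k (A ⧸ m))} ↔
      ∃ (S : Type) (φ : (A ⧸ I) →ₐ[k] (S → k)), Function.Injective φ := by
  set M := {m : Ideal A | I ≤ m ∧ m.IsMaximal ∧ Function.Bijective (algebraMap k (A ⧸ m))}
    with hM
  constructor
  · intro hI
    refine ⟨M, ?_, ?_⟩
    · -- build the embedding
      refine Pi.algHom _ _ (fun m => ?_)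
      refine Ideal.Quotient.liftₐ I
        ((AlgEquiv.ofBijective (Algebra.ofId k (A ⧸ (m : Ideal A))) m.2.2.2).symm.toAlgHom.comp
          (Ideal.Quotient.mkₐ k (m : Ideal A))) (fun a ha => ?_)
      have : Ideal.Quotient.mkₐ k (m : Ideal A) a = 0 :=
        Ideal.Quotient.eq_zero_iff_mem.mpr (m.2.1 ha)
      simp only [AlgHom.comp_apply, this, map_zero]
    · intro x y hxy
      obtain ⟨a, rfl⟩ := Ideal.Quotient.mk_surjective x
      obtain ⟨b, rfl⟩ := Ideal.Quotient.mk_surjective y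
      rw [Ideal.Quotient.eq]
      have key : ∀ m : M, a - b ∈ (m : Ideal A) := by
        intro m
        have h1 := congrFun hxy m
        simp only [Pi.algHom_apply, Ideal.Quotient.liftₐ_apply,
          Ideal.Quotient.lift_mk] at h1
        have h2 : (Ideal.Quotient.mkₐ k (m : Ideal A)) a =
            (Ideal.Quotient.mkₐ k (m : Ideal A)) b := by
          apply (AlgEquiv.ofBijective (Algebra.ofId k (A ⧸ (m : Ideal A)))
            m.2.2.2).symm.injective
          exact h1
        rw [← Ideal.Quotient.eq]
        exact h2
      rw [hI]
      exact (Ideal.mem_sInf).mpr (fun {m} hm => key ⟨m, hm⟩)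
  · rintro ⟨S, φ, hφ⟩
    -- for each s, a character A →ₐ[k] k
    set π : S → (A →ₐ[k] k) :=
      fun s => (Pi.evalAlgHom k (fun _ => k) s).comp (φ.comp (Ideal.Quotient.mkₐ k I)) with hπ
    have πsurj : ∀ s, Function.Surjective (π s) := fun s c => ⟨algebraMap k A c, by simp⟩
    have hker : ∀ s, RingHom.ker (π s) ∈ M := by
      intro s
      refine ⟨?_, ?_, ?_, ?_⟩
      · intro a ha
        have : Ideal.Quotient.mkₐ k I a = 0 := Ideal.Quotient.eq_zero_iff_mem.mpr ha
        show φ ((Ideal.Quotient.mkₐ k I) a) s = 0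
        rw [this]
        simp
      · exact RingHom.ker_isMaximal_of_surjective (π s) (πsurj s)
      · -- injective
        haveI : (RingHom.ker (π s)).IsMaximal :=
          RingHom.ker_isMaximal_of_surjective (π s) (πsurj s)
        exact (algebraMap k (A ⧸ RingHom.ker (π s))).injective
      · -- surjective
        intro x
        obtain ⟨a, rfl⟩ := Ideal.Quotient.mk_surjective x
        refine ⟨π s a, ?_⟩
        have : a - algebraMap k A (π s a) ∈ RingHom.ker (π s) := by
          simp [RingHom.mem_ker, map_sub, AlgHom.commutes]
        have h2 : Ideal.Quotient.mk (RingHom.ker (π s)) a =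
            Ideal.Quotient.mk (RingHom.ker (π s)) (algebraMap k A (π s a)) :=
          Ideal.Quotient.eq.mpr this
        rw [h2]
        rfl
    apply le_antisymm
    · exact le_sInf (fun m hm => hm.1)
    · intro a ha
      rw [Ideal.mem_sInf] at ha
      have hz : ∀ s, π s a = 0 := fun s => (RingHom.mem_ker).mp (ha (hker s))
      have : φ (Ideal.Quotient.mkₐ k I a) = 0 := by
        funext s
        exact hz s
      have h0 : Ideal.Quotient.mkₐ k I a = 0 := by
        apply hφ
        simpa using this
      exact Ideal.Quotient.eq_zero_iff_mem.mp h0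
end

section
/- An ideal I of a finitely generated k-algebra A is special (equal to its equiradical) if and only if: for every polynomial D over k with no rational zero in k, every tuple ā and element b in A, and all m,n ∈ ℕ, b^m·D#(ā, bⁿ) ∈ I implies b ∈ I, where D# is the homogenization of D. -/
open MvPolynomial

variable (k : Type) [Field k] (A : Type) [CommRing A] [Algebra k A]

section Aux

variable {k : Type} [Field k] {A B : Type} [CommRing A] [Algebra k A] [CommRing B] [Algebra k B]

lemma homogEval_map_s16 {m : ℕ} (D : MvPolynomial (Fin m) k) (a : Fin m → A) (c : A)
    (φ : A →ₐ[k] B) :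
    φ (homogEval k A D a c) = homogEval k B D (φ ∘ a) (φ c) := by
  unfold homogEval
  rw [map_sum]
  refine Finset.sum_congr rfl fun s hs => ?_
  rw [map_mul, map_mul, map_pow, map_prod]
  simp [AlgHom.commutes, map_pow, Function.comp]

lemma homogEval_of_unit {m : ℕ} (D : MvPolynomial (Fin m) k) (a : Fin m → A) (c u : A)
    (h : u * c = 1) :
    homogEval k A D a c =
      c ^ D.totalDegree * eval₂ (algebraMap k A) (fun i => a i * u) D := by
  rw [eval₂_eq', Finset.mul_sum]
  unfold homogEval
  refine Finset.sum_congr rfl fun s hs => ?_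
  have hle : (s.sum fun _ e => e) ≤ D.totalDegree := le_totalDegree hs
  have h1 : (∏ i, (a i * u) ^ s i) = (∏ i, a i ^ s i) * u ^ (s.sum fun _ e => e) := by
    rw [Finsupp.sum_fintype _ _ (fun _ => rfl), ← Finset.prod_pow_eq_pow_sum,
      ← Finset.prod_mul_distrib]
    exact Finset.prod_congr rfl fun i _ => mul_pow _ _ _
  have h2 : c ^ D.totalDegree
      = c ^ (s.sum fun _ e => e) * c ^ (D.totalDegree - s.sum fun _ e => e) := by
    rw [← pow_add, Nat.add_sub_cancel' hle]
  have h3 : u ^ (s.sum fun _ e => e) * c ^ (s.sum fun _ e => e) = 1 := by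
    rw [← mul_pow, h, one_pow]
  rw [h1, h2]
  calc algebraMap k A (D.coeff s) * (∏ i, a i ^ s i)
        * c ^ (D.totalDegree - s.sum fun _ e => e)
      = (u ^ (s.sum fun _ e => e) * c ^ (s.sum fun _ e => e)) *
        (algebraMap k A (D.coeff s) * (∏ i, a i ^ s i)
          * c ^ (D.totalDegree - s.sum fun _ e => e)) := by rw [h3, one_mul]
    _ = c ^ (s.sum fun _ e => e) * c ^ (D.totalDegree - s.sum fun _ e => e) *
        (algebraMap k A (D.coeff s) * ((∏ i, a i ^ s i) * u ^ (s.sum fun _ e => e))) := by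
        ring

lemma algebraMap_eval_eq_eval₂ {m : ℕ} (D : MvPolynomial (Fin m) k) (v : Fin m → k) :
    algebraMap k A (eval v D) = eval₂ (algebraMap k A) (fun i => algebraMap k A (v i)) D := by
  have h := eval₂_comp_left (algebraMap k A) (RingHom.id k) v D
  rw [eval₂_id, RingHom.comp_id] at h
  rw [h]
  rfl

noncomputable def phiP (p : Polynomial k) {R : Type*} [CommRing R] [Algebra k R] (f g : R) : R :=
  ∑ i ∈ Finset.range (p.natDegree + 1),
    algebraMap k R (p.coeff i) * f ^ i * g ^ (p.natDegree - i)

lemma phiP_mem_span {R : Type*} [CommRing R] [Algebra k R] (p : Polynomial k)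
    (hp : 1 ≤ p.natDegree) (f g : R) : phiP p f g ∈ Ideal.span {f, g} := by
  have hf : f ∈ Ideal.span {f, g} := Ideal.subset_span (by simp)
  have hg : g ∈ Ideal.span {f, g} := Ideal.subset_span (by simp)
  refine Ideal.sum_mem _ fun i hi => ?_
  rcases Nat.eq_zero_or_pos i with h0 | h0
  · subst h0
    exact Ideal.mul_mem_left _ _ (Ideal.pow_mem_of_mem _ hg _ (by omega))
  · exact Ideal.mul_mem_right _ _
      (Ideal.mul_mem_left _ _ (Ideal.pow_mem_of_mem _ hf _ h0))

lemma phiP_eval {σ : Type*} (p : Polynomial k) (x : σ → k) (f g : MvPolynomial σ k) :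
    eval x (phiP p f g) = phiP p (eval x f) (eval x g) := by
  unfold phiP
  rw [map_sum]
  simp [algebraMap_eq]

lemma phiP_eq_zero (p : Polynomial k) (hd : 1 ≤ p.natDegree) (hm : p.Monic)
    (hr : ∀ x : k, p.eval x ≠ 0)
    {a b : k} (h : phiP p a b = 0) : a = 0 ∧ b = 0 := by
  by_cases hb : b = 0
  · subst hb
    have : phiP p a 0 = a ^ p.natDegree := by
      unfold phiP
      rw [Finset.sum_eq_single p.natDegree]
      · simp [Polynomial.Monic.coeff_natDegree hm]
      · intro i hi hne
        have hpos : 0 < p.natDegree - i := by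
          simp only [Finset.mem_range] at hi; omega
        simp [zero_pow hpos.ne']
      · simp
    rw [this] at h
    exact ⟨pow_eq_zero_iff (by omega) |>.mp h, rfl⟩
  · exfalso
    have key : phiP p a b = b ^ p.natDegree * p.eval (a * b⁻¹) := by
      rw [Polynomial.eval_eq_sum_range, Finset.mul_sum]
      unfold phiP
      refine Finset.sum_congr rfl fun i hi => ?_
      have hile : i ≤ p.natDegree := by simp only [Finset.mem_range] at hi; omega
      have hsplit : b ^ p.natDegree = b ^ (p.natDegree - i) * b ^ i := by
        rw [← pow_add, Nat.sub_add_cancel hile]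
      rw [hsplit, mul_pow, Algebra.algebraMap_self_apply]
      field_simp
      rw [mul_assoc (p.coeff i * a ^ i), ← mul_pow, ← div_eq_mul_one_div, div_self hb, one_pow, mul_one]
    rw [key] at h
    rcases mul_eq_zero.mp h with h' | h'
    · exact hb (pow_eq_zero_iff (by omega) |>.mp h')
    · exact hr _ h'

noncomputable def chainPoly (p : Polynomial k) {σ : Type*} :
    MvPolynomial σ k → List (MvPolynomial σ k) → MvPolynomial σ k
  | f, [] => f
  | f, g :: L => phiP p f (chainPoly p g L)

lemma chainPoly_mem {σ : Type*} (p : Polynomial k) (hp : 1 ≤ p.natDegree)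
    (J : Ideal (MvPolynomial σ k)) :
    ∀ (L : List (MvPolynomial σ k)) (f : MvPolynomial σ k), f ∈ J → (∀ g ∈ L, g ∈ J) →
      chainPoly p f L ∈ J
  | [], f, hf, _ => by rw [chainPoly]; exact hf
  | g :: L, f, hf, hL => by
    rw [chainPoly]
    have h2 : chainPoly p g L ∈ J :=
      chainPoly_mem p hp J L g (hL g (by simp)) (fun x hx => hL x (by simp [hx]))
    have hmem := phiP_mem_span p hp f (chainPoly p g L)
    have hspan : Ideal.span {f, chainPoly p g L} ≤ J := by
      rw [Ideal.span_le]
      intro x hx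
      rcases hx with hx | hx
      · simpa [hx] using hf
      · simp only [Set.mem_singleton_iff] at hx; simpa [hx] using h2
    exact hspan hmem

lemma chainPoly_eval_eq_zero {σ : Type*} (p : Polynomial k) (hd : 1 ≤ p.natDegree)
    (hm : p.Monic) (hr : ∀ x : k, p.eval x ≠ 0) (x : σ → k) :
    ∀ (L : List (MvPolynomial σ k)) (f : MvPolynomial σ k),
      eval x (chainPoly p f L) = 0 → eval x f = 0 ∧ ∀ g ∈ L, eval x g = 0
  | [], f, h => ⟨by rw [chainPoly] at h; exact h, by simp⟩
  | g :: L, f, h => by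
    rw [chainPoly, phiP_eval] at h
    obtain ⟨h1, h2⟩ := phiP_eq_zero p hd hm hr h
    obtain ⟨h3, h4⟩ := chainPoly_eval_eq_zero p hd hm hr x L g h2
    refine ⟨h1, ?_⟩
    intro y hy
    rcases List.mem_cons.mp hy with rfl | hy
    · exact h3
    · exact h4 y hy

end Aux


/-- An ideal `I` of a finitely generated `k`-algebra `A` is special (equal to its
equiradical, the intersection of all maximal ideals `m ⊇ I` with `A/m ≅ k`) if and only if:
for every polynomial `D` over `k` with no rational zero in `k`, every tuple `ā` and element
`b` of `A` and all `m, n ∈ ℕ`, `b^m·D#(ā, bⁿ) ∈ I` implies `b ∈ I`. -/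
theorem special_ideal_iff_homog_condition (hfg : Algebra.FiniteType k A) (I : Ideal A) :
    I = sInf {m : Ideal A | I ≤ m ∧ m.IsMaximal ∧
        Function.Bijective (algebraMap k (A ⧸ m))} ↔
      ∀ (mv : ℕ) (D : MvPolynomial (Fin mv) k) (a : Fin mv → A) (b : A) (m n : ℕ),
        (∀ v : Fin mv → k, eval v D ≠ 0) →
        b ^ m * homogEval k A D a (b ^ n) ∈ I → b ∈ I := by
  constructor
  · intro hI
    intro mv D a b m n hD hmem
    rw [hI, Submodule.mem_sInf]
    rintro 𝔪 ⟨hIm, hmax, hbij⟩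
    haveI := hmax
    letI : Field (A ⧸ 𝔪) := Ideal.Quotient.field 𝔪
    set π := Ideal.Quotient.mkₐ k 𝔪 with hπ
    by_contra hb
    have hπb : π b ≠ 0 := by
      simpa [hπ, Ideal.Quotient.mkₐ_eq_mk, Ne, Ideal.Quotient.eq_zero_iff_mem] using hb
    have h0 : π b ^ m * π (homogEval k A D a (b ^ n)) = 0 := by
      rw [← map_pow, ← map_mul]
      exact Ideal.Quotient.eq_zero_iff_mem.mpr (hIm hmem)
    have hE0 : π (homogEval k A D a (b ^ n)) = 0 := by
      rcases mul_eq_zero.mp h0 with h | h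
      · exact absurd h (pow_ne_zero _ hπb)
      · exact h
    rw [homogEval_map_s16, map_pow] at hE0
    set c : A ⧸ 𝔪 := π b ^ n with hc
    have hcne : c ≠ 0 := pow_ne_zero _ hπb
    rw [homogEval_of_unit _ _ _ c⁻¹ (inv_mul_cancel₀ hcne)] at hE0
    have hev : eval₂ (algebraMap k (A ⧸ 𝔪)) (fun i => (π ∘ a) i * c⁻¹) D = 0 := by
      rcases mul_eq_zero.mp hE0 with h | h
      · exact absurd h (pow_ne_zero _ hcne)
      · exact h
    choose v hv using fun i => hbij.2 ((π ∘ a) i * c⁻¹)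
    refine hD v (hbij.1 ?_)
    rw [map_zero, algebraMap_eval_eq_eval₂, ← hev]
    congr 1
    funext i
    exact hv i
  · intro cond
    refine le_antisymm (le_sInf fun m hm => hm.1) ?_
    intro z hz
    obtain ⟨t, ψ, hψ⟩ := Algebra.FiniteType.iff_quotient_mvPolynomial''.mp hfg
    set zb : A ⧸ I := Ideal.Quotient.mk I z with hzb
    set B := Localization.Away zb with hBdef
    let τ : A →ₐ[k] B := (IsScalarTower.toAlgHom k (A ⧸ I) B).comp (Ideal.Quotient.mkₐ k I)
    have hτ : ∀ w : A, τ w = algebraMap (A ⧸ I) B (Ideal.Quotient.mk I w) := fun w => rfl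
    let u : B := IsLocalization.Away.invSelf zb
    have hu : algebraMap (A ⧸ I) B zb * u = 1 := IsLocalization.Away.mul_invSelf zb
    let g : Fin (t + 1) → B := Fin.snoc (fun i => τ (ψ (X i))) u
    let χ : MvPolynomial (Fin (t + 1)) k →ₐ[k] B := aeval g
    set J : Ideal (MvPolynomial (Fin (t + 1)) k) := RingHom.ker χ.toRingHom with hJdef
    have hJmem : ∀ f, f ∈ J ↔ χ f = 0 := fun f => RingHom.mem_ker
    have hτχ : ∀ P : MvPolynomial (Fin t) k, τ (ψ P) = χ (rename Fin.castSucc P) := by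
      intro P
      have h : τ.comp ψ = χ.comp (rename Fin.castSucc) := by
        apply MvPolynomial.algHom_ext
        intro i
        simp only [AlgHom.coe_comp, Function.comp_apply, rename_X]
        show τ (ψ (X i)) = aeval g (X (Fin.castSucc i))
        rw [aeval_X]
        simp [g, Fin.snoc_castSucc]
      exact DFunLike.congr_fun h P
    -- Claim A
    have claimA : ∀ x : Fin (t + 1) → k, ∃ f ∈ J, eval x f ≠ 0 := by
      intro x
      by_contra hcon
      push_neg at hcon
      set ν : MvPolynomial (Fin t) k →+* k := eval (fun i => x (Fin.castSucc i)) with hν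
      have hkill : ∀ P ∈ RingHom.ker ψ.toRingHom, ν P = 0 := by
        intro P hP
        have h1 : χ (rename Fin.castSucc P) = 0 := by
          rw [← hτχ]
          rw [RingHom.mem_ker] at hP
          show τ (ψ P) = 0
          rw [show ψ P = 0 from hP, map_zero]
        have h2 : eval x (rename Fin.castSucc P) = 0 := hcon _ ((hJmem _).mpr h1)
        rwa [eval_rename] at h2
      let e := RingHom.quotientKerEquivOfRightInverse
        (f := ψ.toRingHom) (g := Function.surjInv hψ) (Function.rightInverse_surjInv hψ)
      let θ : A →+* k := (Ideal.Quotient.lift _ ν hkill).comp e.symm.toRingHom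
      have hesymm : ∀ P : MvPolynomial (Fin t) k,
          e.symm (ψ P) = Ideal.Quotient.mk (RingHom.ker ψ.toRingHom) P := by
        intro P
        have : e (Ideal.Quotient.mk (RingHom.ker ψ.toRingHom) P) = ψ P := by
          rw [RingHom.quotientKerEquivOfRightInverse.apply, RingHom.kerLift_mk]
          rfl
        rw [← this, RingEquiv.symm_apply_apply]
      have hθψ : ∀ P, θ (ψ P) = ν P := by
        intro P
        show (Ideal.Quotient.lift _ ν hkill) (e.symm (ψ P)) = ν P
        rw [hesymm, Ideal.Quotient.lift_mk]
      have hθ0 : ∀ w : A, τ w = 0 → θ w = 0 := by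
        intro w hw
        obtain ⟨P, rfl⟩ := hψ w
        rw [hθψ]
        have h1 : χ (rename Fin.castSucc P) = 0 := by rw [← hτχ]; exact hw
        have h2 := hcon _ ((hJmem _).mpr h1)
        rwa [eval_rename] at h2
      have hθalg : ∀ r : k, θ (algebraMap k A r) = r := by
        intro r
        have h1 : algebraMap k A r = ψ (C r) := by
          rw [show (C r : MvPolynomial (Fin t) k) = algebraMap k _ r from rfl, ψ.commutes]
        rw [h1, hθψ, hν]
        simp
      have hθs : Function.Surjective θ := fun r => ⟨algebraMap k A r, hθalg r⟩
      haveI hmax : (RingHom.ker θ).IsMaximal := RingHom.ker_isMaximal_of_surjective θ hθs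
      haveI : Nontrivial (A ⧸ RingHom.ker θ) := Ideal.Quotient.nontrivial_iff.mpr hmax.ne_top
      have halgq : ∀ r : k, algebraMap k (A ⧸ RingHom.ker θ) r
          = Ideal.Quotient.mk _ (algebraMap k A r) := by
        intro r
        exact ((Ideal.Quotient.mkₐ k (RingHom.ker θ)).commutes r).symm
      have hmem : RingHom.ker θ ∈ {m : Ideal A | I ≤ m ∧ m.IsMaximal ∧
          Function.Bijective (algebraMap k (A ⧸ m))} := by
        refine ⟨?_, hmax, ?_, ?_⟩
        · intro w hw
          have hτw : τ w = 0 := by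
            rw [hτ, Ideal.Quotient.eq_zero_iff_mem.mpr hw, map_zero]
          exact RingHom.mem_ker.mpr (hθ0 w hτw)
        · exact RingHom.injective _
        · intro y
          obtain ⟨w, rfl⟩ := Ideal.Quotient.mk_surjective y
          refine ⟨θ w, ?_⟩
          rw [halgq, Ideal.Quotient.mk_eq_mk_iff_sub_mem, RingHom.mem_ker, map_sub,
            hθalg, sub_self]
      have hzker : θ z = 0 := by
        have := Submodule.mem_sInf.mp hz _ hmem
        rwa [RingHom.mem_ker] at this
      obtain ⟨P, hP⟩ := hψ z
      have hh : χ (rename Fin.castSucc P * X (Fin.last t) - 1) = 0 := by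
        rw [map_sub, map_mul, map_one, ← hτχ, hP]
        have hXl : χ (X (Fin.last t)) = u := by
          show aeval g (X (Fin.last t)) = u
          rw [aeval_X]
          simp [g, Fin.snoc_last]
        rw [hXl, hτ, ← hzb, hu, sub_self]
      have hzero := hcon _ ((hJmem _).mpr hh)
      rw [map_sub, map_mul, eval_rename, map_one, eval_X] at hzero
      have hνP : ν P = 0 := by rw [← hθψ, hP]; exact hzker
      have hzero' : ν P * x (Fin.last t) - 1 = 0 := hzero
      rw [hνP, zero_mul, zero_sub] at hzero'
      exact one_ne_zero (neg_eq_zero.mp hzero')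
    -- find D
    have hfgJ : J.FG := IsNoetherian.noetherian J
    have hD : ∃ Dp : MvPolynomial (Fin (t + 1)) k, Dp ∈ J ∧ ∀ x, eval x Dp ≠ 0 := by
      rcases subsingleton_or_nontrivial B with hB0 | hB1
      · refine ⟨1, (hJmem _).mpr (Subsingleton.elim _ _), fun x => by simp⟩
      · by_cases hac : ∃ p : Polynomial k, p.Monic ∧ 1 ≤ p.natDegree ∧ ∀ y : k, p.eval y ≠ 0
        · obtain ⟨p, hpm, hpd, hpr⟩ := hac
          obtain ⟨s, hs⟩ := hfgJ
          have hLJ : ∀ f ∈ s.toList, f ∈ J := fun f hf => by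
            rw [← hs]; exact Ideal.subset_span (by simpa using hf)
          cases hsl : s.toList with
          | nil =>
            exfalso
            obtain ⟨f, hfJ, hfne⟩ := claimA 0
            have hse : s = ∅ := Finset.toList_eq_nil.mp hsl
            rw [← hs, hse] at hfJ
            simp only [Finset.coe_empty, Ideal.span_empty, Ideal.mem_bot] at hfJ
            rw [hfJ, map_zero] at hfne
            exact hfne rfl
          | cons f0 L =>
            refine ⟨chainPoly p f0 L, ?_, ?_⟩
            · exact chainPoly_mem p hpd J L f0 (hLJ f0 (by rw [hsl]; simp))
                (fun q hq => hLJ q (by rw [hsl]; simp [hq]))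
            · intro x hx0
              obtain ⟨f, hfJ, hfne⟩ := claimA x
              obtain ⟨h1, h2⟩ := chainPoly_eval_eq_zero p hpd hpm hpr x L f0 hx0
              apply hfne
              rw [← hs] at hfJ
              have hle : Ideal.span (↑s : Set _) ≤ RingHom.ker (eval x) := by
                rw [Ideal.span_le]
                intro q hq
                rw [SetLike.mem_coe, RingHom.mem_ker]
                have hql : q ∈ s.toList := Finset.mem_toList.mpr hq
                rw [hsl] at hql
                rcases List.mem_cons.mp hql with rfl | hql'
                · exact h1
                · exact h2 _ hql'
              exact hle hfJ
        · exfalso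
          push_neg at hac
          haveI : IsAlgClosed k := by
            apply IsAlgClosed.of_exists_root
            intro p hm hirr
            refine hac p hm ?_
            by_contra hdeg
            push_neg at hdeg
            have h0 : p.natDegree = 0 := by omega
            rw [hm.natDegree_eq_zero] at h0
            rw [h0] at hirr
            exact not_irreducible_one hirr
          haveI hftQ : Algebra.FiniteType k (A ⧸ I) :=
            Algebra.FiniteType.of_surjective (Ideal.Quotient.mkₐ k I)
              Ideal.Quotient.mk_surjective
          haveI hftB : Algebra.FiniteType (A ⧸ I) B :=
            IsLocalization.finiteType_of_monoid_fg (Submonoid.powers zb) B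
          haveI : Algebra.FiniteType k B := Algebra.FiniteType.trans hftQ hftB
          obtain ⟨m', hm'⟩ := Ideal.exists_maximal B
          haveI := hm'
          letI : Field (B ⧸ m') := Ideal.Quotient.field m'
          haveI : Algebra.FiniteType k (B ⧸ m') :=
            Algebra.FiniteType.of_surjective
              (Ideal.Quotient.mkₐ k m') Ideal.Quotient.mk_surjective
          haveI : Module.Finite k (B ⧸ m') := finite_of_finite_type_of_isJacobsonRing k _
          haveI : Algebra.IsIntegral k (B ⧸ m') := Algebra.IsIntegral.of_finite k _
          have hsurj : Function.Surjective (algebraMap k (B ⧸ m')) :=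
            IsAlgClosed.algebraMap_bijective_of_isIntegral.2
          let ρ : B →ₐ[k] B ⧸ m' := Ideal.Quotient.mkₐ k m'
          choose x hx using fun i => hsurj (ρ (g i))
          obtain ⟨f, hfJ, hfne⟩ := claimA x
          apply hfne
          have h1 : ρ (χ f) = 0 := by rw [(hJmem _).mp hfJ, map_zero]
          have h2 : ρ (χ f) = aeval (fun i => ρ (g i)) f := comp_aeval_apply g ρ f
          have h3 : aeval (fun i => ρ (g i)) f = algebraMap k (B ⧸ m') (eval x f) := by
            rw [algebraMap_eval_eq_eval₂, aeval_def]
            congr 1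
            funext i
            exact (hx i).symm
          have h4 : algebraMap k (B ⧸ m') (eval x f) = 0 := by rw [← h3, ← h2, h1]
          have h5 : algebraMap k (B ⧸ m') (eval x f) = algebraMap k (B ⧸ m') 0 := by
            rw [h4, map_zero]
          exact (algebraMap k (B ⧸ m')).injective h5
    obtain ⟨D, hDJ, hDne⟩ := hD
    let a : Fin (t + 1) → A := Fin.snoc (fun i => ψ (X i) * z) 1
    have hga : ∀ i, τ (a i) * u = g i := by
      intro i
      refine Fin.lastCases ?_ ?_ i
      · have h1 : a (Fin.last t) = 1 := Fin.snoc_last _ _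
        have h2 : g (Fin.last t) = u := Fin.snoc_last _ _
        rw [h1, h2, map_one, one_mul]
      · intro j
        have h1 : a (Fin.castSucc j) = ψ (X j) * z := Fin.snoc_castSucc _ _ _
        have h2 : g (Fin.castSucc j) = τ (ψ (X j)) := Fin.snoc_castSucc _ _ _
        rw [h1, h2, map_mul, mul_assoc, hτ z, ← hzb, hu, mul_one]
    have hτE : τ (homogEval k A D a z) = 0 := by
      rw [homogEval_map_s16]
      have hinv : u * τ z = 1 := by rw [mul_comm, hτ z, ← hzb]; exact hu
      rw [homogEval_of_unit _ _ _ u hinv]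
      have hgg : (fun i => (τ ∘ a) i * u) = g := funext hga
      rw [hgg, ← aeval_def]
      rw [show aeval g D = 0 from (hJmem _).mp hDJ, mul_zero]
    have hloc : algebraMap (A ⧸ I) B (Ideal.Quotient.mk I (homogEval k A D a z)) = 0 := hτE
    rw [IsLocalization.map_eq_zero_iff (Submonoid.powers zb)] at hloc
    obtain ⟨⟨c, hc⟩, hcz⟩ := hloc
    obtain ⟨mm, rfl⟩ := hc
    have hfinal : z ^ mm * homogEval k A D a (z ^ 1) ∈ I := by
      rw [pow_one, ← Ideal.Quotient.eq_zero_iff_mem, map_mul, map_pow]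
      exact hcz
    exact cond (t + 1) D a z mm 1 hDne hfinal
end
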